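/- arXiv:2601.11274 — 2 statements merged into one kernel-verified Lean document; each statement's English description precedes it below -/
import Mathlib

section
/- Let D be a countable dense subset of ℝ^N and let {ν_n}_{n≥1} be a sequence of parametric b-measures on ℝ^N with respect to {ω_j}_{j≥1} whose m-bounds can be chosen so that, for each j ≥ 1, the family {m_j^n : n ≥ 1} is equicontinuous, i.e., for every ε > 0 there is δ > 0 with m_j^n([s,t]) < ε whenever 0 ≤ t − s < δ, for all n ≥ 1. Suppose ν_n converges in σ_D to a parametric b-measure μ, that is, (ν_n)_y(I) → μ_y(I) for every y ∈ D and every compact interval I with rational endpoints. Then μ admits, for each j ≥ 1, an m-bound m_j such that for every ε > 0 there is δ > 0 with m_j([s,t]) < ε whenever s, t ∈ ℝ satisfy 0 ≤ t − s < δ. The analogous statement holds for l-bounds. -/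
open MeasureTheory Set Filter Topology

/-- A (continuous real) b-measure: a set function on the bounded Borel subsets of `ℝ`
which vanishes on `∅`, is countably additive over countable pairwise disjoint families
of bounded Borel sets with bounded union, and vanishes on singletons. -/
structure IsBMeasure (μ : Set ℝ → ℝ) : Prop where
  empty : μ ∅ = 0
  countably_additive : ∀ A : ℕ → Set ℝ, (∀ n, MeasurableSet (A n)) →
    (∀ n, Bornology.IsBounded (A n)) → Pairwise (Function.onFun Disjoint A) →
    Bornology.IsBounded (⋃ n, A n) →
    HasSum (fun n => μ (A n)) (μ (⋃ n, A n))
  singleton : ∀ t : ℝ, μ {t} = 0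

/-- A locally finite atomless Borel measure on `ℝ`. -/
def GoodMeasure (m : Measure ℝ) : Prop :=
  IsLocallyFiniteMeasure m ∧ ∀ t : ℝ, m {t} = 0

/-- `P` is a finite Borel partition of `A`. -/
def IsBorelPartition (A : Set ℝ) {n : ℕ} (P : Fin n → Set ℝ) : Prop :=
  (∀ i, MeasurableSet (P i)) ∧ Pairwise (Function.onFun Disjoint P) ∧ (⋃ i, P i) = A

/-- `|μ| ≤ m` : total-variation bound of the set function `μ` by the measure `m`,
expressed through finite Borel partitions of bounded Borel sets. -/
def TVLE (μ : Set ℝ → ℝ) (m : Measure ℝ) : Prop :=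
  ∀ A : Set ℝ, Bornology.IsBounded A → MeasurableSet A →
    ∀ (n : ℕ) (P : Fin n → Set ℝ), IsBorelPartition A P →
      ∑ i, |μ (P i)| ≤ (m A).toReal

/-- Partition-sum bound `Σ |μ₁(Aᵢ) - μ₂(Aᵢ)| ≤ c · l(A)` for the difference of two
set functions, over finite Borel partitions of bounded Borel sets. -/
def DiffLE (μ₁ μ₂ : Set ℝ → ℝ) (c : ℝ) (l : Measure ℝ) : Prop :=
  ∀ A : Set ℝ, Bornology.IsBounded A → MeasurableSet A →
    ∀ (n : ℕ) (P : Fin n → Set ℝ), IsBorelPartition A P →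
      ∑ i, |μ₁ (P i) - μ₂ (P i)| ≤ c * (l A).toReal

variable {E : Type*} [NormedAddCommGroup E]

/-- `m` is an m-bound of `ν` on the closed ball of radius `j`. -/
def HasMBound (ν : E → Set ℝ → ℝ) (j : ℕ) (m : Measure ℝ) : Prop :=
  GoodMeasure m ∧ ∀ y : E, ‖y‖ ≤ (j : ℝ) → TVLE (ν y) m

/-- `l` is an l-bound of `ν` on the closed ball of radius `j`, for the modulus `ω`. -/
def HasLBound (ω : ℝ → ℝ) (ν : E → Set ℝ → ℝ) (j : ℕ) (l : Measure ℝ) : Prop :=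
  GoodMeasure l ∧ ∀ y₁ y₂ : E, ‖y₁‖ ≤ (j : ℝ) → ‖y₂‖ ≤ (j : ℝ) →
    DiffLE (ν y₁) (ν y₂) (ω ‖y₁ - y₂‖) l

/-- A non-decreasing family of moduli of continuity `{ω_j}`. -/
structure IsModulusFamily (ω : ℕ → ℝ → ℝ) : Prop where
  continuousOn : ∀ j, ContinuousOn (ω j) (Ici 0)
  monotoneOn : ∀ j, MonotoneOn (ω j) (Ici 0)
  map_zero : ∀ j, ω j 0 = 0
  nonneg : ∀ j x, 0 ≤ x → 0 ≤ ω j x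
  mono_index : ∀ j x, 0 ≤ x → ω j x ≤ ω (j + 1) x

/-- A parametric b-measure on `E` with respect to the family of moduli `ω`. -/
def IsParamBMeasure (ω : ℕ → ℝ → ℝ) (ν : E → Set ℝ → ℝ) : Prop :=
  (∀ y, IsBMeasure (ν y)) ∧
    ∀ j : ℕ, 1 ≤ j → ∃ m l : Measure ℝ, HasMBound ν j m ∧ HasLBound (ω j) ν j l

/-- A tagged partition of `[a,b]`. -/
structure TaggedPartition (a b : ℝ) where
  k : ℕ
  k_pos : 0 < k
  t : ℕ → ℝ
  tag : ℕ → ℝ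
  left : t 0 = a
  right : t k = b
  lt : ∀ i < k, t i < t (i + 1)
  tag_mem : ∀ i < k, tag i ∈ Set.Icc (t i) (t (i + 1))

/-- The mesh of the tagged partition is `< δ`. -/
def TaggedPartition.MeshLT {a b : ℝ} (P : TaggedPartition a b) (δ : ℝ) : Prop :=
  ∀ i < P.k, P.t (i + 1) - P.t i < δ

/-- The Riemann sum of the parametric b-measure `ν` along the curve `y` over the
tagged partition `P`. -/
def RiemannSum (ν : E → Set ℝ → ℝ) (y : ℝ → E) {a b : ℝ} (P : TaggedPartition a b) : ℝ :=
  ∑ i ∈ Finset.range P.k, ν (y (P.tag i)) (Set.Icc (P.t i) (P.t (i + 1)))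

/-- `L = ∫_a^b dν_{y(s)}` : `L` is the limit of the Riemann sums of `ν` along `y`
over tagged partitions of `[a,b]` as the mesh tends to `0`. -/
def IsCurveIntegral (ν : E → Set ℝ → ℝ) (y : ℝ → E) (a b : ℝ) (L : ℝ) : Prop :=
  ∀ ε > 0, ∃ δ > 0, ∀ P : TaggedPartition a b, P.MeshLT δ → |L - RiemannSum ν y P| < ε

/-- A suitable set of moduli of continuity `Θ = {θ_j^{[q₁,q₂]}}`. -/
structure IsSuitableModuli (Θ : ℕ → ℚ → ℚ → ℝ → ℝ) : Prop where
  continuousOn : ∀ (j : ℕ) (q₁ q₂ : ℚ), q₁ < q₂ → ContinuousOn (Θ j q₁ q₂) (Ici 0)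
  monotoneOn : ∀ (j : ℕ) (q₁ q₂ : ℚ), q₁ < q₂ → MonotoneOn (Θ j q₁ q₂) (Ici 0)
  map_zero : ∀ (j : ℕ) (q₁ q₂ : ℚ), q₁ < q₂ → Θ j q₁ q₂ 0 = 0
  nonneg : ∀ (j : ℕ) (q₁ q₂ : ℚ) (x : ℝ), q₁ < q₂ → 0 ≤ x → 0 ≤ Θ j q₁ q₂ x
  mono : ∀ (j₁ j₂ : ℕ) (q₁ q₂ p₁ p₂ : ℚ), j₁ ≤ j₂ → q₁ ≤ p₁ → p₁ < p₂ → p₂ ≤ q₂ →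
    ∀ x : ℝ, 0 ≤ x → Θ j₁ p₁ p₂ x ≤ Θ j₂ q₁ q₂ x

/-- The set `𝒦_j^I` of continuous functions `y : I → E`, `I = [q₁,q₂]`, bounded by `j`
and admitting `θ_j^I` as modulus of continuity. -/
def KSet (E : Type*) [NormedAddCommGroup E] (Θ : ℕ → ℚ → ℚ → ℝ → ℝ)
    (j : ℕ) (q₁ q₂ : ℚ) : Set (ℝ → E) :=
  {y | ContinuousOn y (Set.Icc (q₁ : ℝ) (q₂ : ℝ)) ∧
    (∀ t ∈ Set.Icc (q₁ : ℝ) (q₂ : ℝ), ‖y t‖ ≤ (j : ℝ)) ∧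
    ∀ t₁ ∈ Set.Icc (q₁ : ℝ) (q₂ : ℝ), ∀ t₂ ∈ Set.Icc (q₁ : ℝ) (q₂ : ℝ),
      ‖y t₁ - y t₂‖ ≤ Θ j q₁ q₂ |t₁ - t₂|}

/-- Convergence `ν_n → ν₀` in the topology `σ_Θ` : the integrals along curves of
`𝒦_j^I` converge uniformly, for every `j` and every compact interval `I` with
rational endpoints. -/
def SigmaThetaTendsto {E : Type*} [NormedAddCommGroup E] (Θ : ℕ → ℚ → ℚ → ℝ → ℝ)
    (ν : ℕ → E → Set ℝ → ℝ) (ν₀ : E → Set ℝ → ℝ) : Prop :=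
  ∀ (j : ℕ) (q₁ q₂ : ℚ), q₁ < q₂ → ∀ ε > 0, ∃ n₀ : ℕ, ∀ n ≥ n₀,
    ∀ y ∈ KSet E Θ j q₁ q₂, ∀ L L₀ : ℝ,
      IsCurveIntegral (ν n) y (q₁ : ℝ) (q₂ : ℝ) L →
      IsCurveIntegral ν₀ y (q₁ : ℝ) (q₂ : ℝ) L₀ → |L - L₀| < ε

/-- The time-translate `ν·t` of a parametric b-measure: `(ν·t)_y(A) = ν_y(A + t)`. -/
def BTranslate (ν : E → Set ℝ → ℝ) (t : ℝ) : E → Set ℝ → ℝ :=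
  fun y A => ν y ((fun s => s + t) '' A)

/-- The time-translate `m·t` of a Borel measure: `(m·t)(A) = m(A + t)`. -/
noncomputable def MTranslate (m : Measure ℝ) (t : ℝ) : Measure ℝ :=
  Measure.map (fun s => s - t) m

/-- An N-dimensional parametric b-measure on `E` with common m-bounds `m j` and
common Lipschitz l-bounds `l j`. -/
def IsNDimParamBMeasure {M : ℕ} (νbar : Fin M → E → Set ℝ → ℝ)
    (m l : ℕ → Measure ℝ) : Prop :=
  (∀ i y, IsBMeasure (νbar i y)) ∧
    ∀ j : ℕ, 1 ≤ j → GoodMeasure (m j) ∧ GoodMeasure (l j) ∧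
      (∀ i, ∀ y : E, ‖y‖ ≤ (j : ℝ) → TVLE (νbar i y) (m j)) ∧
      (∀ i, ∀ y₁ y₂ : E, ‖y₁‖ ≤ (j : ℝ) → ‖y₂‖ ≤ (j : ℝ) →
        DiffLE (νbar i y₁) (νbar i y₂) ‖y₁ - y₂‖ (l j))

/-- The oriented curve integral: `∫_b^a := -∫_a^b`. -/
def IsSignedCurveIntegral (ν : E → Set ℝ → ℝ) (y : ℝ → E) (a b : ℝ) (L : ℝ) : Prop :=
  (a ≤ b ∧ IsCurveIntegral ν y a b L) ∨ (b < a ∧ IsCurveIntegral ν y b a (-L))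

/-- `y` is a solution on `S` of the Cauchy problem `y' = ν̄_y`, `y(t₀) = y₀`, for the
N-dimensional parametric b-measure `ν̄`: componentwise,
`y_i(t) = y_{0,i} + ∫_{t₀}^t dν^i_{y(s)}`. -/
def IsSolutionOn {M : ℕ} (νbar : Fin M → EuclideanSpace ℝ (Fin M) → Set ℝ → ℝ)
    (t₀ : ℝ) (y₀ : EuclideanSpace ℝ (Fin M)) (S : Set ℝ)
    (y : ℝ → EuclideanSpace ℝ (Fin M)) : Prop :=
  t₀ ∈ S ∧ y t₀ = y₀ ∧ ContinuousOn y S ∧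
    ∀ t ∈ S, ∀ i : Fin M, IsSignedCurveIntegral (νbar i) y t₀ t (y t i - y₀ i)

/-- `y` is the maximal (noncontinuable) solution, defined on the open interval `S`:
every solution on an interval containing `t₀` is a restriction of `y`. -/
def IsMaximalSolution {M : ℕ} (νbar : Fin M → EuclideanSpace ℝ (Fin M) → Set ℝ → ℝ)
    (t₀ : ℝ) (y₀ : EuclideanSpace ℝ (Fin M)) (S : Set ℝ)
    (y : ℝ → EuclideanSpace ℝ (Fin M)) : Prop :=
  IsSolutionOn νbar t₀ y₀ S y ∧ IsOpen S ∧ S.OrdConnected ∧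
    ∀ S' : Set ℝ, S'.OrdConnected → ∀ z, IsSolutionOn νbar t₀ y₀ S' z →
      S' ⊆ S ∧ Set.EqOn z y S'


section Aux
open Bornology

lemma bmeas_add_pair {φ : Set ℝ → ℝ} (hφ : IsBMeasure φ) {B C : Set ℝ}
    (hBm : MeasurableSet B) (hCm : MeasurableSet C) (hBb : IsBounded B) (hCb : IsBounded C)
    (hd : Disjoint B C) : φ (B ∪ C) = φ B + φ C := by
  classical
  set A : ℕ → Set ℝ := fun n => if n = 0 then B else if n = 1 then C else ∅ with hA
  have hmeas : ∀ n, MeasurableSet (A n) := by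
    intro n; simp only [hA]; split_ifs <;> simp [hBm, hCm]
  have hbdd : ∀ n, IsBounded (A n) := by
    intro n; simp only [hA]; split_ifs <;> simp [hBb, hCb]
  have hpw : Pairwise (Function.onFun Disjoint A) := by
    intro i j hij
    simp only [Function.onFun, hA]
    split_ifs with h1 h2 h3 h4 h5 h6 h7 h8 <;>
      first
        | (exfalso; omega)
        | exact hd
        | exact hd.symm
        | exact Set.disjoint_empty _
        | exact Set.empty_disjoint _
        | exact disjoint_self.2 rfl
  have hU : (⋃ n, A n) = B ∪ C := by
    apply subset_antisymm
    · refine iUnion_subset fun n => ?_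
      simp only [hA]; split_ifs <;> simp [subset_union_left, subset_union_right]
    · intro x hx
      rcases hx with hx | hx
      · exact mem_iUnion.2 ⟨0, by simp [hA, hx]⟩
      · exact mem_iUnion.2 ⟨1, by simp [hA, hx]⟩
  have hs := hφ.countably_additive A hmeas hbdd hpw (hU ▸ hBb.union hCb)
  rw [hU] at hs
  have hs2 : HasSum (fun n => φ (A n)) (φ B + φ C) := by
    have : ∀ n ∉ ({0, 1} : Finset ℕ), φ (A n) = 0 := by
      intro n hn
      simp only [Finset.mem_insert, Finset.mem_singleton] at hn
      push_neg at hn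
      simp [hA, hn.1, hn.2, hφ.empty]
    have : HasSum (fun n => φ (A n)) (∑ b ∈ ({0,1} : Finset ℕ), φ (A b)) :=
      hasSum_sum_of_ne_finset_zero this
    convert this using 1
    simp [hA, Finset.sum_insert, hφ.empty]
  exact hs.unique hs2

lemma bmeas_biUnion {φ : Set ℝ → ℝ} (hφ : IsBMeasure φ) {ι : Type*} [DecidableEq ι]
    (s : Finset ι) (f : ι → Set ℝ)
    (hm : ∀ i ∈ s, MeasurableSet (f i)) (hb : ∀ i ∈ s, IsBounded (f i))
    (hd : ∀ i ∈ s, ∀ j ∈ s, i ≠ j → Disjoint (f i) (f j)) :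
    φ (⋃ i ∈ s, f i) = ∑ i ∈ s, φ (f i) := by
  classical
  induction s using Finset.induction_on with
  | empty => simp [hφ.empty]
  | @insert a s ha ih =>
    have hm' : ∀ i ∈ s, MeasurableSet (f i) := fun i hi => hm i (Finset.mem_insert_of_mem hi)
    have hb' : ∀ i ∈ s, IsBounded (f i) := fun i hi => hb i (Finset.mem_insert_of_mem hi)
    have hd' : ∀ i ∈ s, ∀ j ∈ s, i ≠ j → Disjoint (f i) (f j) := fun i hi j hj =>
      hd i (Finset.mem_insert_of_mem hi) j (Finset.mem_insert_of_mem hj)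
    have hub : IsBounded (⋃ i ∈ s, f i) := by
      exact (Bornology.isBounded_biUnion s.finite_toSet).2 fun i hi => hb' i hi
    have hum : MeasurableSet (⋃ i ∈ s, f i) := by
      exact MeasurableSet.biUnion s.countable_toSet (fun i hi => hm' i hi)
    have hdis : Disjoint (f a) (⋃ i ∈ s, f i) := by
      rw [Set.disjoint_iUnion₂_right]
      exact fun i hi => hd a (Finset.mem_insert_self a s) i (Finset.mem_insert_of_mem hi)
        (fun h => ha (h ▸ hi))
    rw [Finset.set_biUnion_insert, Finset.sum_insert ha,
      bmeas_add_pair hφ (hm a (Finset.mem_insert_self a s)) hum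
        (hb a (Finset.mem_insert_self a s)) hub hdis, ih hm' hb' hd']
end Aux
section Aux2
open Bornology

lemma tvle_single {φ : Set ℝ → ℝ} {m : Measure ℝ} (h : TVLE φ m) {A : Set ℝ}
    (hb : IsBounded A) (hm : MeasurableSet A) : |φ A| ≤ (m A).toReal := by
  have := h A hb hm 1 (fun _ => A) ⟨fun _ => hm, Subsingleton.pairwise, iUnion_const A⟩
  simpa using this

lemma tvle_pair {φ : Set ℝ → ℝ} {m : Measure ℝ} (h : TVLE φ m) {B C : Set ℝ}
    (hBb : IsBounded B) (hBm : MeasurableSet B) (hCb : IsBounded C) (hCm : MeasurableSet C)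
    (hd : Disjoint B C) : |φ B| + |φ C| ≤ (m (B ∪ C)).toReal := by
  have := h (B ∪ C) (hBb.union hCb) (hBm.union hCm) 2 (fun i => if i = 0 then B else C) ?_
  · have h2 : ∑ i : Fin 2, |φ (if i = 0 then B else C)| = |φ B| + |φ C| := by
      simp [Fin.sum_univ_two]
    rwa [h2] at this
  · refine ⟨fun i => by dsimp only; split_ifs <;> assumption, ?_, ?_⟩
    · intro i j hij
      simp only [Function.onFun]
      fin_cases i <;> fin_cases j <;> simp_all [hd, hd.symm]
    · apply subset_antisymm
      · refine iUnion_subset fun i => ?_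
        split_ifs <;> simp [subset_union_left, subset_union_right]
      · intro x hx
        rcases hx with hx | hx
        · exact mem_iUnion.2 ⟨0, by simp [hx]⟩
        · exact mem_iUnion.2 ⟨1, by simp [hx]⟩

lemma diffle_single {φ ψ : Set ℝ → ℝ} {c : ℝ} {l : Measure ℝ} (h : DiffLE φ ψ c l) {A : Set ℝ}
    (hb : IsBounded A) (hm : MeasurableSet A) : |φ A - ψ A| ≤ c * (l A).toReal := by
  have := h A hb hm 1 (fun _ => A) ⟨fun _ => hm, Subsingleton.pairwise, iUnion_const A⟩
  simpa using this

/-- symmetric-difference control -/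
lemma tvle_symmdiff {φ : Set ℝ → ℝ} {m : Measure ℝ} (hφ : IsBMeasure φ) (h : TVLE φ m)
    {B C : Set ℝ} (hBb : IsBounded B) (hBm : MeasurableSet B)
    (hCb : IsBounded C) (hCm : MeasurableSet C) :
    |φ B - φ C| ≤ (m ((B \ C) ∪ (C \ B))).toReal := by
  have hB : φ B = φ (B ∩ C) + φ (B \ C) := by
    rw [← bmeas_add_pair hφ (hBm.inter hCm) (hBm.diff hCm) (hBb.subset Set.inter_subset_left)
      (hBb.subset (diff_subset)) (disjoint_sdiff_self_right.mono_left Set.inter_subset_right)]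
    congr 1
    rw [Set.inter_union_diff]
  have hC : φ C = φ (B ∩ C) + φ (C \ B) := by
    rw [← bmeas_add_pair hφ (hBm.inter hCm) (hCm.diff hBm) (hBb.subset Set.inter_subset_left)
      (hCb.subset (diff_subset)) ]
    · congr 1
      rw [Set.inter_comm, Set.inter_union_diff]
    · exact disjoint_sdiff_self_right.mono_left Set.inter_subset_left
  have key : |φ B - φ C| ≤ |φ (B \ C)| + |φ (C \ B)| := by
    rw [hB, hC]
    have : φ (B ∩ C) + φ (B \ C) - (φ (B ∩ C) + φ (C \ B)) = φ (B \ C) - φ (C \ B) := by ring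
    rw [this]
    exact abs_sub _ _
  refine key.trans ?_
  exact tvle_pair h (hBb.subset diff_subset) (hBm.diff hCm) (hCb.subset diff_subset)
    (hCm.diff hBm) (disjoint_sdiff_sdiff)

end Aux2
section Aux3
open Bornology ENNReal

lemma chain_bound (μseq : ℕ → Measure ℝ) (hatom : ∀ n (t : ℝ), μseq n {t} = 0)
    {δ : ℝ} (hδ : 0 < δ)
    (h1 : ∀ n, ∀ s t : ℝ, 0 ≤ t - s → t - s < δ → μseq n (Set.Icc s t) < 1) :
    ∀ (k : ℕ) (n : ℕ) (s t : ℝ), t - s ≤ k * (δ/2) → μseq n (Set.Icc s t) ≤ k := by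
  intro k
  induction k with
  | zero =>
    intro n s t ht
    simp only [Nat.cast_zero, zero_mul] at ht ⊢
    rcases le_or_gt s t with h | h
    · have : s = t := le_antisymm h (by linarith)
      simp [← this, Set.Icc_self, hatom n s]
    · simp [Set.Icc_eq_empty_of_lt h]
  | succ k ih =>
    intro n s t ht
    rcases le_or_gt (t - s) (k * (δ/2)) with h | h
    · exact (ih n s t h).trans (by exact_mod_cast Nat.cast_le.2 (Nat.le_succ k))
    · have hk0 : (0:ℝ) ≤ (k:ℝ)*(δ/2) := by positivity
      rcases le_or_gt t (s + δ/2) with h2 | h2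
      · have h3 : μseq n (Set.Icc s t) < 1 := h1 n s t (by linarith) (by linarith)
        calc μseq n (Set.Icc s t) ≤ 1 := h3.le
          _ ≤ (k : ℝ≥0∞) + 1 := le_add_self
          _ = ((k+1 : ℕ) : ℝ≥0∞) := by norm_cast
      · have hsub : Set.Icc s t ⊆ Set.Icc s (s + δ/2) ∪ Set.Icc (s + δ/2) t := by
          intro x hx
          rcases le_or_gt x (s + δ/2) with hx2 | hx2
          · exact Or.inl ⟨hx.1, hx2⟩
          · exact Or.inr ⟨hx2.le, hx.2⟩
        calc μseq n (Set.Icc s t)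
            ≤ μseq n (Set.Icc s (s + δ/2)) + μseq n (Set.Icc (s + δ/2) t) :=
              (measure_mono hsub).trans (measure_union_le _ _)
          _ ≤ 1 + k := by
              gcongr
              · exact (h1 n s (s + δ/2) (by linarith) (by linarith)).le
              · exact ih n (s + δ/2) t (by push_cast at ht ⊢; linarith)
          _ = ((k+1 : ℕ) : ℝ≥0∞) := by push_cast; ring

lemma stieltjes_limit (μseq : ℕ → Measure ℝ) (hatom : ∀ n (t : ℝ), μseq n {t} = 0)
    (heq : ∀ ε > (0:ℝ), ∃ δ > (0:ℝ), ∀ n, ∀ s t : ℝ,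
      0 ≤ t - s → t - s < δ → μseq n (Set.Icc s t) < ENNReal.ofReal ε)
    (u : Ultrafilter ℕ) :
    ∃ κ : Measure ℝ, GoodMeasure κ ∧
      (∀ ε > (0:ℝ), ∃ δ > (0:ℝ), ∀ s t : ℝ,
        0 ≤ t - s → t - s < δ → κ (Set.Icc s t) < ENNReal.ofReal ε) ∧
      (∀ s t : ℝ, s ≤ t →
        Tendsto (fun n => (μseq n (Set.Icc s t)).toReal) ↑u (𝓝 ((κ (Set.Icc s t)).toReal))) := by
  classical
  obtain ⟨δ₀, hδ₀, h1⟩ := heq 1 one_pos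
  simp only [ENNReal.ofReal_one] at h1
  have hchain := chain_bound μseq hatom hδ₀ h1
  have hfin : ∀ n (s t : ℝ), μseq n (Set.Icc s t) ≠ ⊤ := by
    intro n s t
    have h := hchain ⌈(t - s)/(δ₀/2)⌉₊ n s t ?_
    · exact (h.trans_lt (ENNReal.natCast_lt_top _)).ne
    · rcases le_or_gt (t - s) 0 with h | h
      · exact h.trans (by positivity)
      · rw [← div_le_iff₀ (by linarith)]
        exact Nat.le_ceil _
  have hfinIoc : ∀ n (s t : ℝ), μseq n (Set.Ioc s t) ≠ ⊤ := fun n s t =>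
    ((measure_mono Set.Ioc_subset_Icc_self).trans_lt (lt_top_iff_ne_top.2 (hfin n s t))).ne
  haveI : ∀ n, NullSingletonClass (μseq n) := fun n => ⟨hatom n⟩
  set Fn : ℕ → ℝ → ℝ := fun n t =>
    (μseq n (Set.Ioc 0 t)).toReal - (μseq n (Set.Ioc t 0)).toReal with hFn
  have hIcc_Ioc : ∀ n (s t : ℝ), μseq n (Set.Icc s t) = μseq n (Set.Ioc s t) :=
    fun n s t => (measure_congr Ioc_ae_eq_Icc).symm
  have hdisjIoc : ∀ a b c : ℝ, Disjoint (Set.Ioc a b) (Set.Ioc b c) := by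
    intro a b c
    rw [Set.disjoint_left]
    rintro x ⟨_, h1'⟩ ⟨h2', _⟩
    exact absurd h1' (not_le.2 h2')
  have hIocadd : ∀ n (a b c : ℝ), a ≤ b → b ≤ c →
      (μseq n (Set.Ioc a c)).toReal
        = (μseq n (Set.Ioc a b)).toReal + (μseq n (Set.Ioc b c)).toReal := by
    intro n a b c hab hbc
    rw [← ENNReal.toReal_add (hfinIoc n a b) (hfinIoc n b c),
      ← measure_union (hdisjIoc a b c) measurableSet_Ioc, Set.Ioc_union_Ioc_eq_Ioc hab hbc]
  have hdiff : ∀ n (s t : ℝ), s ≤ t → Fn n t - Fn n s = (μseq n (Set.Icc s t)).toReal := by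
    intro n s t hst
    rw [hIcc_Ioc n s t]
    simp only [hFn]
    by_cases h0s : 0 ≤ s
    · have e1 : Set.Ioc t (0:ℝ) = ∅ := Set.Ioc_eq_empty (not_lt.2 (by linarith))
      have e2 : Set.Ioc s (0:ℝ) = ∅ := Set.Ioc_eq_empty (not_lt.2 (by linarith))
      rw [e1, e2, hIocadd n 0 s t h0s hst]
      simp only [measure_empty, ENNReal.toReal_zero]
      ring
    · push_neg at h0s
      by_cases ht0 : t ≤ 0
      · have e1 : Set.Ioc (0:ℝ) t = ∅ := Set.Ioc_eq_empty (not_lt.2 (by linarith))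
        have e2 : Set.Ioc (0:ℝ) s = ∅ := Set.Ioc_eq_empty (not_lt.2 (by linarith))
        rw [e1, e2, hIocadd n s t 0 hst ht0]
        simp only [measure_empty, ENNReal.toReal_zero]
        ring
      · push_neg at ht0
        have e1 : Set.Ioc t (0:ℝ) = ∅ := Set.Ioc_eq_empty (not_lt.2 (by linarith))
        have e2 : Set.Ioc (0:ℝ) s = ∅ := Set.Ioc_eq_empty (not_lt.2 (by linarith))
        rw [e1, e2, hIocadd n s 0 t h0s.le ht0.le]
        simp only [measure_empty, ENNReal.toReal_zero]
        ring
  -- uniform pointwise bound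
  have hbdd : ∀ t : ℝ, ∀ n, Fn n t ∈ Set.Icc (-(2*(⌈(2*|t|)/(δ₀/2)⌉₊ : ℝ)))
      (2*(⌈(2*|t|)/(δ₀/2)⌉₊ : ℝ)) := by
    intro t n
    set k := ⌈(2*|t|)/(δ₀/2)⌉₊ with hk
    have hb : μseq n (Set.Icc (-|t|) |t|) ≤ (k : ℝ≥0∞) := by
      apply hchain k n
      rw [← div_le_iff₀ (by linarith)]
      have : |t| - -|t| = 2*|t| := by ring
      rw [this]
      exact Nat.le_ceil _
    have hbr : (μseq n (Set.Icc (-|t|) |t|)).toReal ≤ (k:ℝ) := by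
      have := ENNReal.toReal_mono (by simp) hb
      simpa using this
    have h1' : (μseq n (Set.Ioc 0 t)).toReal ≤ (k:ℝ) := by
      refine le_trans (ENNReal.toReal_mono (hfin n _ _) (measure_mono ?_)) hbr
      intro x hx
      constructor
      · have h := hx.1; have := abs_nonneg t; linarith
      · exact hx.2.trans (le_abs_self t)
    have h2' : (μseq n (Set.Ioc t 0)).toReal ≤ (k:ℝ) := by
      refine le_trans (ENNReal.toReal_mono (hfin n _ _) (measure_mono ?_)) hbr
      intro x hx
      constructor
      · have := neg_abs_le t; have := hx.1; linarith
      · have := hx.2; have := abs_nonneg t; linarith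
    have hp1 : 0 ≤ (μseq n (Set.Ioc 0 t)).toReal := ENNReal.toReal_nonneg
    have hp2 : 0 ≤ (μseq n (Set.Ioc t 0)).toReal := ENNReal.toReal_nonneg
    constructor <;> simp only [hFn] <;> nlinarith
  -- ultrafilter limits
  have hF : ∀ t : ℝ, ∃ c, Tendsto (fun n => Fn n t) ↑u (𝓝 c) := by
    intro t
    have hmem : ↑(u.map (fun n => Fn n t)) ≤
        𝓟 (Set.Icc (-(2*(⌈(2*|t|)/(δ₀/2)⌉₊ : ℝ))) (2*(⌈(2*|t|)/(δ₀/2)⌉₊ : ℝ))) := by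
      rw [Ultrafilter.coe_map, le_principal_iff, mem_map]
      filter_upwards with n using hbdd t n
    obtain ⟨c, _, hc⟩ := (isCompact_Icc (a := -(2*(⌈(2*|t|)/(δ₀/2)⌉₊ : ℝ)))
        (b := 2*(⌈(2*|t|)/(δ₀/2)⌉₊ : ℝ))).ultrafilter_le_nhds (u.map (fun n => Fn n t)) hmem
    exact ⟨c, by rwa [Ultrafilter.coe_map] at hc⟩
  choose F hFt using hF
  have hmono : Monotone F := by
    intro s t hst
    have hT : Tendsto (fun n => Fn n t - Fn n s) ↑u (𝓝 (F t - F s)) := (hFt t).sub (hFt s)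
    have : 0 ≤ F t - F s := by
      refine ge_of_tendsto hT ?_
      filter_upwards with n
      rw [hdiff n s t hst]
      exact ENNReal.toReal_nonneg
    linarith
  have hmod : ∀ ε > (0:ℝ), ∃ δ > (0:ℝ), ∀ s t : ℝ, 0 ≤ t - s → t - s < δ →
      F t - F s ≤ ε := by
    intro ε hε
    obtain ⟨δ, hδ, hd⟩ := heq ε hε
    refine ⟨δ, hδ, fun s t hst hstδ => ?_⟩
    have hT : Tendsto (fun n => Fn n t - Fn n s) ↑u (𝓝 (F t - F s)) := (hFt t).sub (hFt s)
    refine le_of_tendsto hT ?_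
    filter_upwards with n
    rw [hdiff n s t (by linarith)]
    exact ENNReal.toReal_le_of_le_ofReal hε.le (hd n s t hst hstδ).le
  have hcont : Continuous F := by
    rw [Metric.continuous_iff]
    intro b ε hε
    obtain ⟨δ, hδ, hd⟩ := hmod (ε/2) (by linarith)
    refine ⟨δ, hδ, fun a hab => ?_⟩
    rw [Real.dist_eq] at hab ⊢
    rcases le_total a b with h | h
    · rw [abs_of_nonpos (by linarith [hmono h])]
      have := hd a b (by linarith) (by rw [abs_of_nonpos (by linarith)] at hab; linarith)
      linarith
    · rw [abs_of_nonneg (by linarith [hmono h])]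
      have := hd b a (by linarith) (by rw [abs_of_nonneg (by linarith)] at hab; linarith)
      linarith
  set f : StieltjesFunction ℝ := ⟨F, hmono, fun x => hcont.continuousWithinAt⟩ with hf
  have hleft : ∀ a : ℝ, Function.leftLim F a = F a := by
    intro a
    exact leftLim_eq_of_tendsto
      ((hcont.tendsto a).mono_left nhdsWithin_le_nhds)
  have hIccf : ∀ s t : ℝ, s ≤ t → f.measure (Set.Icc s t) = ENNReal.ofReal (F t - F s) := by
    intro s t hst
    rw [f.measure_Icc]
    congr 1
    rw [hf]
    simp only [hleft]
  refine ⟨f.measure, ⟨inferInstance, fun t => ?_⟩, ?_, ?_⟩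
  · rw [f.measure_singleton]
    simp [hf, hleft]
  · intro ε hε
    obtain ⟨δ, hδ, hd⟩ := hmod (ε/2) (by linarith)
    refine ⟨δ, hδ, fun s t hst hstδ => ?_⟩
    rw [hIccf s t (by linarith)]
    calc ENNReal.ofReal (F t - F s) ≤ ENNReal.ofReal (ε/2) :=
          ENNReal.ofReal_le_ofReal (hd s t hst hstδ)
      _ < ENNReal.ofReal ε := by
          rw [ENNReal.ofReal_lt_ofReal_iff hε]
          linarith
  · intro s t hst
    rw [hIccf s t hst, ENNReal.toReal_ofReal (by linarith [hmono hst])]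
    have hT : Tendsto (fun n => Fn n t - Fn n s) ↑u (𝓝 (F t - F s)) := (hFt t).sub (hFt s)
    refine hT.congr ?_
    intro n
    exact hdiff n s t hst
end Aux3
section Aux4
open Bornology ENNReal

/-- Find the grid cell containing a non-grid point. -/
lemma cell_find (Q : Finset ℚ) {a b : ℚ} (ha : a ∈ Q) (hb : b ∈ Q) {x : ℝ}
    (hx : x ∈ Set.Ioo (a:ℝ) (b:ℝ)) (hxQ : ∀ q ∈ Q, (q:ℝ) ≠ x) :
    ∃ p : ℚ × ℚ, p.1 ∈ Q ∧ p.2 ∈ Q ∧ p.1 < p.2 ∧ (∀ r ∈ Q, ¬(p.1 < r ∧ r < p.2)) ∧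
      x ∈ Set.Ioo ((p.1:ℝ)) ((p.2:ℝ)) ∧ a ≤ p.1 ∧ p.2 ≤ b := by
  classical
  set L := Q.filter (fun q : ℚ => (q:ℝ) < x) with hL
  set R := Q.filter (fun q : ℚ => x < (q:ℝ)) with hR
  have haL : a ∈ L := Finset.mem_filter.2 ⟨ha, hx.1⟩
  have hbR : b ∈ R := Finset.mem_filter.2 ⟨hb, hx.2⟩
  set qm := L.max' ⟨a, haL⟩ with hqm
  set qp := R.min' ⟨b, hbR⟩ with hqp
  have hqmL : qm ∈ L := L.max'_mem _
  have hqpR : qp ∈ R := R.min'_mem _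
  have hqmQ : qm ∈ Q := (Finset.mem_filter.1 hqmL).1
  have hqpQ : qp ∈ Q := (Finset.mem_filter.1 hqpR).1
  have hqmx : (qm:ℝ) < x := (Finset.mem_filter.1 hqmL).2
  have hxqp : x < (qp:ℝ) := (Finset.mem_filter.1 hqpR).2
  refine ⟨(qm, qp), hqmQ, hqpQ, ?_, ?_, ⟨hqmx, hxqp⟩, ?_, ?_⟩
  · have : (qm:ℝ) < (qp:ℝ) := hqmx.trans hxqp
    exact_mod_cast this
  · rintro r hrQ ⟨h1, h2⟩
    rcases lt_trichotomy (r:ℝ) x with h | h | h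
    · have hrL : r ∈ L := Finset.mem_filter.2 ⟨hrQ, h⟩
      have := L.le_max' r hrL
      have : (r:ℚ) ≤ qm := this
      exact absurd h1 (not_lt.2 this)
    · exact hxQ r hrQ h
    · have hrR : r ∈ R := Finset.mem_filter.2 ⟨hrQ, h⟩
      have := R.min'_le r hrR
      exact absurd h2 (not_lt.2 this)
  · exact L.le_max' a haL
  · exact R.min'_le b hbR

/-- Cells of a grid are pairwise disjoint. -/
lemma cell_disjoint {p p' : ℚ × ℚ} (hp : ∀ r ∈ ({p'.1, p'.2} : Finset ℚ), ¬(p.1 < r ∧ r < p.2))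
    (hp' : ∀ r ∈ ({p.1, p.2} : Finset ℚ), ¬(p'.1 < r ∧ r < p'.2))
    (h1 : p.1 < p.2) (h1' : p'.1 < p'.2) (hne : p ≠ p') :
    Disjoint (Set.Ioo ((p.1:ℝ)) ((p.2:ℝ))) (Set.Ioo ((p'.1:ℝ)) ((p'.2:ℝ))) := by
  rw [Set.disjoint_left]
  rintro x ⟨ha1, ha2⟩ ⟨hb1, hb2⟩
  -- derive in ℚ order facts
  have key : p.1 = p'.1 ∧ p.2 = p'.2 := by
    constructor
    · rcases lt_trichotomy p.1 p'.1 with h | h | h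
      · exfalso
        refine hp p'.1 (by simp) ⟨h, ?_⟩
        have : (p'.1:ℝ) < (p.2:ℝ) := hb1.trans ha2
        exact_mod_cast this
      · exact h
      · exfalso
        refine hp' p.1 (by simp) ⟨h, ?_⟩
        have : (p.1:ℝ) < (p'.2:ℝ) := ha1.trans hb2
        exact_mod_cast this
    · rcases lt_trichotomy p.2 p'.2 with h | h | h
      · exfalso
        refine hp' p.2 (by simp) ⟨?_, h⟩
        have : (p'.1:ℝ) < (p.2:ℝ) := hb1.trans ha2
        exact_mod_cast this
      · exact h
      · exfalso
        refine hp p'.2 (by simp) ⟨?_, h⟩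
        have : (p.1:ℝ) < (p'.2:ℝ) := ha1.trans hb2
        exact_mod_cast this
  exact hne (Prod.ext key.1 key.2)
end Aux4
section Aux4b
open Bornology ENNReal

lemma key_approx (φ : Set ℝ → ℝ) (hφ : IsBMeasure φ) (ρ κ : Measure ℝ)
    [IsLocallyFiniteMeasure ρ] [IsLocallyFiniteMeasure κ] (hρatom : ∀ t : ℝ, ρ {t} = 0)
    (hΔ : ∀ B C : Set ℝ, IsBounded B → MeasurableSet B → IsBounded C → MeasurableSet C →
      |φ B - φ C| ≤ (ρ ((B \ C) ∪ (C \ B))).toReal)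
    (hcell : ∀ q₁ q₂ : ℚ, (q₁:ℝ) < (q₂:ℝ) →
      |φ (Set.Ioo (q₁:ℝ) (q₂:ℝ))| ≤ (κ (Set.Ioo (q₁:ℝ) (q₂:ℝ))).toReal) :
    ∀ A : Set ℝ, IsBounded A → MeasurableSet A →
      ∀ (n : ℕ) (P : Fin n → Set ℝ), IsBorelPartition A P →
        ∑ i, |φ (P i)| ≤ (κ A).toReal := by
  classical
  intro A hAb hAm n P hPart
  obtain ⟨hPm, hPd, hPU⟩ := hPart
  haveI : NullSingletonClass ρ := ⟨hρatom⟩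
  set σ : Measure ℝ := ρ + κ with hσ
  have hfinB : ∀ B : Set ℝ, IsBounded B → σ B ≠ ⊤ := by
    intro B hB
    obtain ⟨R, hR⟩ := hB.subset_closedBall 0
    have h1 : ρ (Metric.closedBall 0 R) < ⊤ := (isCompact_closedBall 0 R).measure_lt_top
    have h2 : κ (Metric.closedBall 0 R) < ⊤ := (isCompact_closedBall 0 R).measure_lt_top
    have hle : σ B ≤ ρ (Metric.closedBall 0 R) + κ (Metric.closedBall 0 R) := by
      rw [hσ, Measure.add_apply]
      exact add_le_add (measure_mono hR) (measure_mono hR)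
    exact (hle.trans_lt (ENNReal.add_lt_top.2 ⟨h1, h2⟩)).ne
  haveI : IsLocallyFiniteMeasure σ :=
    ⟨fun x => ⟨Metric.closedBall x 1, Metric.closedBall_mem_nhds x one_pos,
      lt_top_iff_ne_top.2 (hfinB _ Metric.isBounded_closedBall)⟩⟩
  have hρleσ : ∀ B : Set ℝ, ρ B ≤ σ B := fun B => le_self_add
  have hκleσ : ∀ B : Set ℝ, κ B ≤ σ B := fun B => le_add_self
  have hPiA : ∀ i, P i ⊆ A := fun i => hPU ▸ Set.subset_iUnion P i
  have hPib : ∀ i, IsBounded (P i) := fun i => hAb.subset (hPiA i)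
  refine le_of_forall_pos_le_add fun ε hε => ?_
  set den : ℝ := (n:ℝ)^2 + 2*(n:ℝ) + 1 with hden
  have hden0 : 0 < den := by positivity
  set c : ℝ := ε / den with hc
  have hc0 : 0 < c := by positivity
  set ε₁ : ℝ≥0∞ := ENNReal.ofReal c with hε₁
  have hε₁0 : ε₁ ≠ 0 := by simp [hε₁, hc0, ENNReal.ofReal_eq_zero, not_le]
  -- outer approximation of A
  obtain ⟨U, hAU, hUo, hUfin, hUd⟩ := hAm.exists_isOpen_diff_lt (μ := σ) (hfinB A hAb) hε₁0
  -- inner compact and outer open approximations of each P i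
  have hKex : ∀ i : Fin n, ∃ K, K ⊆ P i ∧ IsCompact K ∧ σ (P i \ K) < ε₁ :=
    fun i => (hPm i).exists_isCompact_diff_lt (hfinB _ (hPib i)) hε₁0
  choose K hKP hKc hKd using hKex
  have hVex : ∀ i : Fin n, ∃ V, V ⊇ P i ∧ IsOpen V ∧ σ V < ⊤ ∧ σ (V \ P i) < ε₁ :=
    fun i => (hPm i).exists_isOpen_diff_lt (hfinB _ (hPib i)) hε₁0
  choose V hPV hVo _ hVd using hVex
  set Ui : Fin n → Set ℝ := fun i => U ∩ V i with hUi
  have hUiP : ∀ i, P i ⊆ Ui i := fun i => Set.subset_inter ((hPiA i).trans hAU) (hPV i)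
  have hUio : ∀ i, IsOpen (Ui i) := fun i => hUo.inter (hVo i)
  have hUid : ∀ i, σ (Ui i \ P i) < ε₁ := fun i =>
    (measure_mono (Set.diff_subset_diff_left Set.inter_subset_right)).trans_lt (hVd i)
  have hUiU : ∀ i, Ui i ⊆ U := fun i => Set.inter_subset_left
  -- rational interval covers
  have hcov : ∀ i : Fin n, ∃ T : Finset (ℚ × ℚ),
      (∀ p ∈ T, (p.1:ℝ) < (p.2:ℝ) ∧ Set.Ioo (p.1:ℝ) (p.2:ℝ) ⊆ Ui i) ∧
      K i ⊆ ⋃ p ∈ T, Set.Ioo (p.1:ℝ) (p.2:ℝ) := by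
    intro i
    set cset : ℚ × ℚ → Set ℝ := fun p =>
      if (p.1:ℝ) < (p.2:ℝ) ∧ Set.Ioo (p.1:ℝ) (p.2:ℝ) ⊆ Ui i then Set.Ioo (p.1:ℝ) (p.2:ℝ)
      else ∅ with hcset
    have hopen : ∀ p, IsOpen (cset p) := by
      intro p
      simp only [hcset]
      split_ifs <;> first | exact isOpen_Ioo | exact isOpen_empty
    have hcover : K i ⊆ ⋃ p, cset p := by
      intro x hx
      have hxU : x ∈ Ui i := (hKP i).trans (hUiP i) hx
      obtain ⟨r, hr0, hball⟩ := Metric.isOpen_iff.1 (hUio i) x hxU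
      obtain ⟨a, ha1, ha2⟩ := exists_rat_btwn (show x - r < x by linarith)
      obtain ⟨b, hb1, hb2⟩ := exists_rat_btwn (show x < x + r by linarith)
      have hsub : Set.Ioo (a:ℝ) (b:ℝ) ⊆ Ui i := by
        refine Set.Subset.trans ?_ hball
        rw [Real.ball_eq_Ioo]
        intro y hy
        exact ⟨by linarith [hy.1], by linarith [hy.2]⟩
      refine Set.mem_iUnion.2 ⟨(a, b), ?_⟩
      simp only [hcset]
      rw [if_pos ⟨ha2.trans hb1, hsub⟩]
      exact ⟨ha2, hb1⟩
    obtain ⟨T, hT⟩ := (hKc i).elim_finite_subcover cset hopen hcover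
    refine ⟨T.filter (fun p => (p.1:ℝ) < (p.2:ℝ) ∧ Set.Ioo (p.1:ℝ) (p.2:ℝ) ⊆ Ui i),
      fun p hp => (Finset.mem_filter.1 hp).2, ?_⟩
    intro x hx
    obtain ⟨p, hpT, hpx⟩ := Set.mem_iUnion₂.1 (hT hx)
    simp only [hcset] at hpx
    by_cases hcond : (p.1:ℝ) < (p.2:ℝ) ∧ Set.Ioo (p.1:ℝ) (p.2:ℝ) ⊆ Ui i
    · rw [if_pos hcond] at hpx
      exact Set.mem_biUnion (Finset.mem_filter.2 ⟨hpT, hcond⟩) hpx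
    · rw [if_neg hcond] at hpx
      exact absurd hpx (Set.notMem_empty x)
  choose T hTprop hTK using hcov
  set J : Fin n → Set ℝ := fun i => ⋃ p ∈ T i, Set.Ioo (p.1:ℝ) (p.2:ℝ) with hJ
  have hJU : ∀ i, J i ⊆ Ui i := by
    intro i
    exact Set.iUnion₂_subset fun p hp => (hTprop i p hp).2
  have hKJ : ∀ i, K i ⊆ J i := hTK
  -- the global grid
  set Q : Finset ℚ := Finset.univ.biUnion
    (fun i : Fin n => (T i).image Prod.fst ∪ (T i).image Prod.snd) with hQ
  have hmemQ : ∀ i, ∀ p ∈ T i, p.1 ∈ Q ∧ p.2 ∈ Q := by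
    intro i p hp
    constructor <;> refine Finset.mem_biUnion.2 ⟨i, Finset.mem_univ i, ?_⟩
    · exact Finset.mem_union_left _ (Finset.mem_image_of_mem Prod.fst hp)
    · exact Finset.mem_union_right _ (Finset.mem_image_of_mem Prod.snd hp)
  set Qset : Set ℝ := (fun q : ℚ => (q:ℝ)) '' ↑Q with hQset
  have hQsetcnt : Qset.Countable := (Q.countable_toSet.image _)
  set cells : Finset (ℚ × ℚ) := (Q ×ˢ Q).filter
    (fun p => p.1 < p.2 ∧ ∀ r ∈ Q, ¬(p.1 < r ∧ r < p.2)) with hcells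
  have hcelldisj : ∀ p ∈ cells, ∀ p' ∈ cells, p ≠ p' →
      Disjoint (Set.Ioo ((p.1:ℝ)) ((p.2:ℝ))) (Set.Ioo ((p'.1:ℝ)) ((p'.2:ℝ))) := by
    intro p hp p' hp' hne
    obtain ⟨_, h1, h2⟩ := Finset.mem_filter.1 hp
    obtain ⟨hmem', h1', h2'⟩ := Finset.mem_filter.1 hp'
    have hmem'' := Finset.mem_product.1 hmem'
    have hmem := Finset.mem_product.1 (Finset.mem_filter.1 hp).1
    refine cell_disjoint ?_ ?_ h1 h1' hne
    · intro r hr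
      have : r ∈ Q := by
        simp only [Finset.mem_insert, Finset.mem_singleton] at hr
        rcases hr with rfl | rfl
        · exact hmem''.1
        · exact hmem''.2
      exact h2 r this
    · intro r hr
      have : r ∈ Q := by
        simp only [Finset.mem_insert, Finset.mem_singleton] at hr
        rcases hr with rfl | rfl
        · exact hmem.1
        · exact hmem.2
      exact h2' r this
  -- assignment of cells to indices
  set C : Fin n → Finset (ℚ × ℚ) := fun i =>
    cells.filter (fun p => Set.Ioo ((p.1:ℝ)) ((p.2:ℝ)) ⊆ J i) with hC
  have hJC : ∀ i, J i \ Qset ⊆ ⋃ p ∈ C i, Set.Ioo ((p.1:ℝ)) ((p.2:ℝ)) := by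
    intro i x hx
    obtain ⟨hxJ, hxQ⟩ := hx
    obtain ⟨p0, hp0T, hp0x⟩ := Set.mem_iUnion₂.1 hxJ
    have hxQ' : ∀ q ∈ Q, (q:ℝ) ≠ x := by
      intro q hq hqx
      exact hxQ ⟨q, hq, hqx⟩
    obtain ⟨p, hpQ1, hpQ2, hplt, hpnone, hpx, hpa, hpb⟩ :=
      cell_find Q (hmemQ i p0 hp0T).1 (hmemQ i p0 hp0T).2 hp0x hxQ'
    have hcellmem : p ∈ cells := Finset.mem_filter.2
      ⟨Finset.mem_product.2 ⟨hpQ1, hpQ2⟩, hplt, hpnone⟩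
    have hsub : Set.Ioo ((p.1:ℝ)) ((p.2:ℝ)) ⊆ J i := by
      refine Set.Subset.trans ?_ (Set.subset_iUnion₂ (s := fun p (_ : p ∈ T i) =>
        Set.Ioo ((p.1:ℝ)) ((p.2:ℝ))) p0 hp0T)
      intro y hy
      constructor
      · calc (p0.1:ℝ) ≤ (p.1:ℝ) := by exact_mod_cast hpa
          _ < y := hy.1
      · calc y < (p.2:ℝ) := hy.2
          _ ≤ (p0.2:ℝ) := by exact_mod_cast hpb
    exact Set.mem_biUnion (Finset.mem_filter.2 ⟨hcellmem, hsub⟩) hpx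
  have hCJ : ∀ i, ∀ p ∈ C i, Set.Ioo ((p.1:ℝ)) ((p.2:ℝ)) ⊆ J i :=
    fun i p hp => (Finset.mem_filter.1 hp).2
  have hCcells : ∀ i, C i ⊆ cells := fun i => Finset.filter_subset _ _
  set D : Fin n → Finset (ℚ × ℚ) := fun i =>
    C i \ ((Finset.univ.filter (fun l => l < i)).biUnion C) with hD
  have hDC : ∀ i, D i ⊆ C i := fun i => Finset.sdiff_subset
  set J' : Fin n → Set ℝ := fun i => ⋃ p ∈ D i, Set.Ioo ((p.1:ℝ)) ((p.2:ℝ)) with hJ'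
  have hJ'J : ∀ i, J' i ⊆ J i := fun i =>
    Set.iUnion₂_subset fun p hp => hCJ i p (hDC i hp)
  have hJ'm : ∀ i, MeasurableSet (J' i) :=
    fun i => MeasurableSet.biUnion (D i).countable_toSet (fun p _ => measurableSet_Ioo)
  have hJ'b : ∀ i, IsBounded (J' i) := by
    intro i
    apply (Bornology.isBounded_biUnion (D i).finite_toSet).2
    intro p _
    exact Metric.isBounded_Ioo _ _
  -- D finsets are pairwise disjoint
  have hDdisj : ∀ i l : Fin n, i ≠ l → Disjoint (D i) (D l) := by
    intro i l hil
    rcases hil.lt_or_gt with h | h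
    · rw [Finset.disjoint_right]
      intro p hpD
      have hpCi : p ∈ C i → False := by
        intro hpCi
        have : p ∈ (Finset.univ.filter (fun m => m < l)).biUnion C :=
          Finset.mem_biUnion.2 ⟨i, Finset.mem_filter.2 ⟨Finset.mem_univ i, h⟩, hpCi⟩
        exact (Finset.mem_sdiff.1 hpD).2 this
      intro hpDi
      exact hpCi ((hDC i) hpDi)
    · rw [Finset.disjoint_left]
      intro p hpD hpDl
      have : p ∈ (Finset.univ.filter (fun m => m < i)).biUnion C :=
        Finset.mem_biUnion.2 ⟨l, Finset.mem_filter.2 ⟨Finset.mem_univ l, h⟩, (hDC l) hpDl⟩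
      exact (Finset.mem_sdiff.1 hpD).2 this
  -- additivity of φ on the disjoint cell unions
  have hφJ' : ∀ i, φ (J' i) = ∑ p ∈ D i, φ (Set.Ioo ((p.1:ℝ)) ((p.2:ℝ))) := by
    intro i
    refine bmeas_biUnion hφ (D i) _ (fun p _ => measurableSet_Ioo)
      (fun p _ => Metric.isBounded_Ioo _ _) ?_
    intro p hp p' hp' hne
    exact hcelldisj p (hCcells i (hDC i hp)) p' (hCcells i (hDC i hp')) hne
  have hcelllt : ∀ p ∈ cells, (p.1:ℝ) < (p.2:ℝ) := by
    intro p hp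
    exact_mod_cast (Finset.mem_filter.1 hp).2.1
  have hstep1 : ∀ i, |φ (J' i)| ≤ ∑ p ∈ D i, (κ (Set.Ioo ((p.1:ℝ)) ((p.2:ℝ)))).toReal := by
    intro i
    rw [hφJ' i]
    refine (Finset.abs_sum_le_sum_abs _ _).trans (Finset.sum_le_sum fun p hp => ?_)
    exact hcell p.1 p.2 (hcelllt p (hCcells i (hDC i hp)))
  -- total cell mass is at most κ U
  set E : Finset (ℚ × ℚ) := Finset.univ.biUnion D with hE
  have hEcells : E ⊆ cells := by
    intro p hp
    obtain ⟨i, _, hpD⟩ := Finset.mem_biUnion.1 hp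
    exact hCcells i (hDC i hpD)
  have hκUfin : κ U ≠ ⊤ := ne_top_of_le_ne_top hUfin.ne (hκleσ U)
  have hκAfin : κ A ≠ ⊤ := ne_top_of_le_ne_top (hfinB A hAb) (hκleσ A)
  have hsum2 : ∑ i, ∑ p ∈ D i, (κ (Set.Ioo ((p.1:ℝ)) ((p.2:ℝ)))).toReal ≤ (κ U).toReal := by
    rw [← Finset.sum_biUnion (fun i _ l _ h => hDdisj i l h)]
    have hfin' : ∀ p ∈ E, κ (Set.Ioo ((p.1:ℝ)) ((p.2:ℝ))) ≠ ⊤ := by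
      intro p _
      exact ne_top_of_le_ne_top (hfinB _ (Metric.isBounded_Ioo _ _)) (hκleσ _)
    rw [← ENNReal.toReal_sum hfin']
    refine ENNReal.toReal_mono hκUfin ?_
    rw [← measure_biUnion_finset ?_ (fun p _ => measurableSet_Ioo)]
    · refine measure_mono (Set.iUnion₂_subset fun p hp => ?_)
      obtain ⟨i, _, hpD⟩ := Finset.mem_biUnion.1 hp
      exact ((hCJ i p (hDC i hpD)).trans (hJU i)).trans (hUiU i)
    · intro p hp p' hp' hne
      exact hcelldisj p (hEcells hp) p' (hEcells hp') hne
  -- error control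
  set W : Set ℝ := ⋃ l, (Ui l \ P l) with hW
  have hincl : ∀ i, (P i \ J' i) ∪ (J' i \ P i) ⊆
      (P i \ K i) ∪ ((Ui i \ P i) ∪ (Qset ∪ W)) := by
    intro i x hx
    rcases hx with ⟨hxP, hxJ'⟩ | ⟨hxJ', hxP⟩
    · by_cases hxK : x ∈ K i
      · by_cases hxQ : x ∈ Qset
        · exact Or.inr (Or.inr (Or.inl hxQ))
        · have hxJ : x ∈ J i := hKJ i hxK
          obtain ⟨p, hpC, hpx⟩ := Set.mem_iUnion₂.1 (hJC i ⟨hxJ, hxQ⟩)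
          by_cases hpD : p ∈ D i
          · exact absurd (Set.mem_biUnion hpD hpx) hxJ'
          · have hpB : p ∈ (Finset.univ.filter (fun m => m < i)).biUnion C := by
              by_contra hcon
              exact hpD (Finset.mem_sdiff.2 ⟨hpC, hcon⟩)
            obtain ⟨l, hlmem, hpCl⟩ := Finset.mem_biUnion.1 hpB
            have hli : l ≠ i := ne_of_lt (Finset.mem_filter.1 hlmem).2
            have hxUl : x ∈ Ui l := (hJU l) (hCJ l p hpCl hpx)
            have hxPl : x ∉ P l := by
              intro hxPl
              exact Set.disjoint_left.1 (hPd hli) hxPl hxP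
            exact Or.inr (Or.inr (Or.inr (Set.mem_iUnion.2 ⟨l, hxUl, hxPl⟩)))
      · exact Or.inl ⟨hxP, hxK⟩
    · exact Or.inr (Or.inl ⟨(hJ'J i).trans (hJU i) hxJ', hxP⟩)
  have hρofReal : (n:ℝ≥0∞) * ENNReal.ofReal c = ENNReal.ofReal ((n:ℝ)*c) := by
    rw [← ENNReal.ofReal_natCast n, ← ENNReal.ofReal_mul (by positivity)]
  have herr : ∀ i, (ρ ((P i \ J' i) ∪ (J' i \ P i))).toReal ≤ ((n:ℝ)+2)*c := by
    intro i
    have hb : ρ ((P i \ J' i) ∪ (J' i \ P i)) ≤ ENNReal.ofReal (((n:ℝ)+2)*c) := by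
      refine (measure_mono (hincl i)).trans ?_
      refine (measure_union_le _ _).trans ?_
      have h1 : ρ (P i \ K i) ≤ ENNReal.ofReal c :=
        ((hρleσ _).trans (hKd i).le)
      have h2 : ρ ((Ui i \ P i) ∪ (Qset ∪ W)) ≤
          ENNReal.ofReal c + (0 + ENNReal.ofReal ((n:ℝ)*c)) := by
        refine (measure_union_le _ _).trans (add_le_add ((hρleσ _).trans (hUid i).le) ?_)
        refine (measure_union_le _ _).trans (add_le_add ?_ ?_)
        · rw [hQsetcnt.measure_zero ρ]
        · refine (measure_iUnion_le _).trans ?_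
          rw [← hρofReal]
          calc ∑' (l : Fin n), ρ (Ui l \ P l)
              ≤ ∑' (_ : Fin n), ENNReal.ofReal c := by
                refine ENNReal.tsum_le_tsum fun l => (hρleσ _).trans (hUid l).le
            _ = (n:ℝ≥0∞) * ENNReal.ofReal c := by
                rw [tsum_fintype]
                simp [Finset.sum_const, nsmul_eq_mul]
      refine (add_le_add h1 h2).trans ?_
      rw [zero_add, ← ENNReal.ofReal_add hc0.le (by positivity),
        ← ENNReal.ofReal_add (by positivity) (by positivity)]
      refine ENNReal.ofReal_le_ofReal (le_of_eq ?_)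
      ring
    exact ENNReal.toReal_le_of_le_ofReal (by positivity) hb
  -- assembly
  have hmain : ∀ i, |φ (P i)| ≤ |φ (J' i)| + (ρ ((P i \ J' i) ∪ (J' i \ P i))).toReal := by
    intro i
    have h1 : |φ (P i)| ≤ |φ (J' i)| + |φ (P i) - φ (J' i)| := by
      have h2 := abs_add_le (φ (J' i)) (φ (P i) - φ (J' i))
      rw [(by ring : φ (J' i) + (φ (P i) - φ (J' i)) = φ (P i))] at h2
      exact h2
    exact h1.trans (add_le_add_right (hΔ (P i) (J' i) (hPib i) (hPm i) (hJ'b i) (hJ'm i)) _)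
  have hκU : (κ U).toReal ≤ (κ A).toReal + c := by
    have hle : κ U ≤ κ A + ENNReal.ofReal c := by
      have h3 : κ U ≤ κ A + κ (U \ A) := by
        calc κ U = κ (A ∪ (U \ A)) := by rw [Set.union_diff_cancel hAU]
          _ ≤ κ A + κ (U \ A) := measure_union_le _ _
      exact h3.trans (add_le_add_right ((hκleσ _).trans hUd.le) _)
    have := ENNReal.toReal_mono (by finiteness) hle
    rwa [ENNReal.toReal_add hκAfin ENNReal.ofReal_ne_top, ENNReal.toReal_ofReal hc0.le] at this
  calc ∑ i, |φ (P i)|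
      ≤ ∑ i, (|φ (J' i)| + (ρ ((P i \ J' i) ∪ (J' i \ P i))).toReal) :=
        Finset.sum_le_sum fun i _ => hmain i
    _ = (∑ i, |φ (J' i)|) + ∑ i, (ρ ((P i \ J' i) ∪ (J' i \ P i))).toReal :=
        Finset.sum_add_distrib
    _ ≤ (κ U).toReal + ∑ _i : Fin n, ((n:ℝ)+2)*c := by
        refine add_le_add ((Finset.sum_le_sum fun i _ => hstep1 i).trans hsum2)
          (Finset.sum_le_sum fun i _ => herr i)
    _ ≤ ((κ A).toReal + c) + (n:ℝ)*(((n:ℝ)+2)*c) := by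
        refine add_le_add hκU (le_of_eq ?_)
        rw [Finset.sum_const, Finset.card_univ, Fintype.card_fin, nsmul_eq_mul]
    _ = (κ A).toReal + den * c := by rw [hden]; ring
    _ = (κ A).toReal + ε := by
        rw [hc, mul_div_cancel₀ _ hden0.ne']
end Aux4b
section Aux5
open Bornology ENNReal Metric

lemma locfin_add (m : Measure ℝ) [IsLocallyFiniteMeasure m] :
    IsLocallyFiniteMeasure (m + m) := by
  constructor
  intro x
  obtain ⟨s, hs, hfin⟩ := (inferInstance : IsLocallyFiniteMeasure m).finiteAtNhds x
  exact ⟨s, hs, by rw [Measure.add_apply]; exact ENNReal.add_lt_top.2 ⟨hfin, hfin⟩⟩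

lemma locfin_smul (c : ℝ) (m : Measure ℝ) [IsLocallyFiniteMeasure m] :
    IsLocallyFiniteMeasure (ENNReal.ofReal c • m) := by
  constructor
  intro x
  obtain ⟨s, hs, hfin⟩ := (inferInstance : IsLocallyFiniteMeasure m).finiteAtNhds x
  refine ⟨s, hs, ?_⟩
  rw [Measure.smul_apply, smul_eq_mul]
  exact ENNReal.mul_lt_top ENNReal.ofReal_lt_top hfin

/-- Approximation of a point of the closed ball by points of a dense set inside the ball. -/
lemma dense_ball_approx {E : Type*} [NormedAddCommGroup E] [NormedSpace ℝ E]
    {D : Set E} (hDd : Dense D) {j : ℝ} (hj : 0 < j) {y : E} (hy : ‖y‖ ≤ j) :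
    ∃ z : ℕ → E, (∀ k, z k ∈ D ∧ ‖z k‖ ≤ j) ∧ Tendsto z atTop (𝓝 y) := by
  have hball : ball (0 : E) j ⊆ closure (D ∩ ball 0 j) := by
    intro w hw
    rw [_root_.mem_closure_iff]
    intro O hO hwO
    obtain ⟨x, hxD, hxO⟩ := hDd.exists_mem_open (hO.inter isOpen_ball)
      ⟨w, hwO, hw⟩
    exact ⟨x, hxO.1, hxD, hxO.2⟩
  have hy' : y ∈ closure (D ∩ ball 0 j) := by
    have h1 : y ∈ closedBall (0 : E) j := mem_closedBall_zero_iff.2 hy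
    rw [← closure_ball (0 : E) hj.ne'] at h1
    exact (closure_minimal hball isClosed_closure) h1
  obtain ⟨z, hz, hzlim⟩ := mem_closure_iff_seq_limit.1 hy'
  exact ⟨z, fun k => ⟨(hz k).1, (mem_ball_zero_iff.1 (hz k).2).le⟩, hzlim⟩

end Aux5
section Aux6
open Bornology ENNReal Metric

lemma bmeas_Ioo_eq_Icc {φ : Set ℝ → ℝ} (hφ : IsBMeasure φ) {a b : ℝ} (hab : a < b) :
    φ (Set.Ioo a b) = φ (Set.Icc a b) := by
  have h1 : φ (Set.Ico a b) = φ (Set.Ioo a b) + φ {a} := by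
    rw [← Set.Ioo_union_left hab]
    exact bmeas_add_pair hφ measurableSet_Ioo (measurableSet_singleton _)
      (Metric.isBounded_Ioo _ _) Bornology.isBounded_singleton
      (Set.disjoint_singleton_right.2 (by simp))
  have h2 : φ (Set.Icc a b) = φ (Set.Ico a b) + φ {b} := by
    rw [← Set.Ico_union_right hab.le]
    exact bmeas_add_pair hφ measurableSet_Ico (measurableSet_singleton _)
      (Metric.isBounded_Ico _ _) Bornology.isBounded_singleton
      (Set.disjoint_singleton_right.2 (by simp))
  rw [h2, h1, hφ.singleton, hφ.singleton]
  ring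

lemma squeeze_param {E : Type*} [NormedAddCommGroup E]
    (μ : E → Set ℝ → ℝ) (lμ : Measure ℝ) (w : ℝ → ℝ) (j : ℕ)
    (hcw : Tendsto w (𝓝[Set.Ici 0] 0) (𝓝 0))
    (hdiff : ∀ y₁ y₂ : E, ‖y₁‖ ≤ (j:ℝ) → ‖y₂‖ ≤ (j:ℝ) →
      DiffLE (μ y₁) (μ y₂) (w ‖y₁ - y₂‖) lμ)
    {y : E} {z : ℕ → E} (hy : ‖y‖ ≤ (j:ℝ)) (hz : ∀ k, ‖z k‖ ≤ (j:ℝ))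
    (hzlim : Tendsto z atTop (𝓝 y))
    {B : Set ℝ} (hBb : IsBounded B) (hBm : MeasurableSet B) :
    Tendsto (fun k => μ (z k) B) atTop (𝓝 (μ y B)) := by
  have h0 : Tendsto (fun k => ‖z k - y‖) atTop (𝓝[Set.Ici 0] 0) := by
    rw [tendsto_nhdsWithin_iff]
    constructor
    · have := (hzlim.sub (tendsto_const_nhds (x := y))).norm
      simpa using this
    · exact Filter.Eventually.of_forall fun k => norm_nonneg _
  have hωlim : Tendsto (fun k => w ‖z k - y‖) atTop (𝓝 0) := hcw.comp h0
  rw [tendsto_iff_dist_tendsto_zero]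
  refine squeeze_zero (fun k => dist_nonneg) (fun k => ?_)
    (by simpa using hωlim.mul_const (lμ B).toReal)
  rw [Real.dist_eq]
  exact diffle_single (hdiff (z k) y (hz k) hy) hBb hBm
end Aux6
theorem stmt8 {N : ℕ} (ω : ℕ → ℝ → ℝ) (hω : IsModulusFamily ω)
    (D : Set (EuclideanSpace ℝ (Fin N))) (hDc : D.Countable) (hDd : Dense D)
    (ν : ℕ → EuclideanSpace ℝ (Fin N) → Set ℝ → ℝ)
    (hν : ∀ n, IsParamBMeasure ω (ν n))
    (mB lB : ℕ → ℕ → Measure ℝ)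
    (hmB : ∀ n j, 1 ≤ j → HasMBound (ν n) j (mB n j))
    (hlB : ∀ n j, 1 ≤ j → HasLBound (ω j) (ν n) j (lB n j))
    (hmeq : ∀ j, 1 ≤ j → ∀ ε > (0 : ℝ), ∃ δ > (0 : ℝ), ∀ n, ∀ s t : ℝ,
      0 ≤ t - s → t - s < δ → mB n j (Set.Icc s t) < ENNReal.ofReal ε)
    (hleq : ∀ j, 1 ≤ j → ∀ ε > (0 : ℝ), ∃ δ > (0 : ℝ), ∀ n, ∀ s t : ℝ,
      0 ≤ t - s → t - s < δ → lB n j (Set.Icc s t) < ENNReal.ofReal ε)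
    (μ : EuclideanSpace ℝ (Fin N) → Set ℝ → ℝ) (hμ : IsParamBMeasure ω μ)
    (hconv : ∀ y ∈ D, ∀ q₁ q₂ : ℚ, q₁ < q₂ →
      Tendsto (fun n => ν n y (Set.Icc (q₁ : ℝ) (q₂ : ℝ))) atTop
        (𝓝 (μ y (Set.Icc (q₁ : ℝ) (q₂ : ℝ))))) :
    (∀ j, 1 ≤ j → ∃ m : Measure ℝ, HasMBound μ j m ∧
      ∀ ε > (0 : ℝ), ∃ δ > (0 : ℝ), ∀ s t : ℝ,
        0 ≤ t - s → t - s < δ → m (Set.Icc s t) < ENNReal.ofReal ε) ∧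
    (∀ j, 1 ≤ j → ∃ l : Measure ℝ, HasLBound (ω j) μ j l ∧
      ∀ ε > (0 : ℝ), ∃ δ > (0 : ℝ), ∀ s t : ℝ,
        0 ≤ t - s → t - s < δ → l (Set.Icc s t) < ENNReal.ofReal ε) := by
  classical
  obtain ⟨u, hu⟩ := Ultrafilter.exists_le (atTop : Filter ℕ)
  have hconvU : ∀ y ∈ D, ∀ q₁ q₂ : ℚ, q₁ < q₂ →
      Tendsto (fun n => ν n y (Set.Icc (q₁:ℝ) (q₂:ℝ))) ↑u
        (𝓝 (μ y (Set.Icc (q₁:ℝ) (q₂:ℝ)))) :=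
    fun y hy q₁ q₂ hq => (hconv y hy q₁ q₂ hq).mono_left hu
  constructor
  · -- m-bounds
    intro j hj
    have hj0 : (0:ℝ) < (j:ℝ) := by exact_mod_cast hj
    obtain ⟨mμ, lμ, hmμ, hlμ⟩ := hμ.2 j hj
    obtain ⟨κm, hgoodm, hmodm, hlimm⟩ := stieltjes_limit (fun n => mB n j)
      (fun n t => (hmB n j hj).1.2 t) (hmeq j hj) u
    haveI : MeasureTheory.NullSingletonClass κm := ⟨hgoodm.2⟩
    have hcw : Tendsto (ω j) (𝓝[Set.Ici 0] 0) (𝓝 0) := by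
      have h := hω.continuousOn j 0 (Set.mem_Ici.2 le_rfl)
      rw [ContinuousWithinAt, hω.map_zero j] at h
      exact h
    have hIccD : ∀ y ∈ D, ‖y‖ ≤ (j:ℝ) → ∀ q₁ q₂ : ℚ, (q₁:ℝ) < (q₂:ℝ) →
        |μ y (Set.Icc (q₁:ℝ) (q₂:ℝ))| ≤ (κm (Set.Icc (q₁:ℝ) (q₂:ℝ))).toReal := by
      intro y hyD hy q₁ q₂ hq
      have hq' : q₁ < q₂ := by exact_mod_cast hq
      have hT1 : Tendsto (fun n => |ν n y (Set.Icc (q₁:ℝ) (q₂:ℝ))|) ↑u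
          (𝓝 |μ y (Set.Icc (q₁:ℝ) (q₂:ℝ))|) := (hconvU y hyD q₁ q₂ hq').abs
      have hT2 := hlimm (q₁:ℝ) (q₂:ℝ) hq.le
      refine le_of_tendsto_of_tendsto' hT1 hT2 fun n => ?_
      exact tvle_single ((hmB n j hj).2 y hy) (Metric.isBounded_Icc _ _) measurableSet_Icc
    have hIcc : ∀ y : EuclideanSpace ℝ (Fin N), ‖y‖ ≤ (j:ℝ) →
        ∀ q₁ q₂ : ℚ, (q₁:ℝ) < (q₂:ℝ) →
        |μ y (Set.Icc (q₁:ℝ) (q₂:ℝ))| ≤ (κm (Set.Icc (q₁:ℝ) (q₂:ℝ))).toReal := by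
      intro y hy q₁ q₂ hq
      obtain ⟨z, hz, hzlim⟩ := dense_ball_approx hDd hj0 hy
      have hzconv : Tendsto (fun k => μ (z k) (Set.Icc (q₁:ℝ) (q₂:ℝ))) atTop
          (𝓝 (μ y (Set.Icc (q₁:ℝ) (q₂:ℝ)))) :=
        squeeze_param μ lμ (ω j) j hcw (fun y₁ y₂ h1 h2 => hlμ.2 y₁ y₂ h1 h2)
          hy (fun k => (hz k).2) hzlim (Metric.isBounded_Icc _ _) measurableSet_Icc
      refine le_of_tendsto hzconv.abs (Filter.Eventually.of_forall fun k => ?_)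
      exact hIccD (z k) (hz k).1 (hz k).2 q₁ q₂ hq
    have hcellm : ∀ y : EuclideanSpace ℝ (Fin N), ‖y‖ ≤ (j:ℝ) →
        ∀ q₁ q₂ : ℚ, (q₁:ℝ) < (q₂:ℝ) →
        |μ y (Set.Ioo (q₁:ℝ) (q₂:ℝ))| ≤ (κm (Set.Ioo (q₁:ℝ) (q₂:ℝ))).toReal := by
      intro y hy q₁ q₂ hq
      rw [bmeas_Ioo_eq_Icc (hμ.1 y) hq, measure_congr Ioo_ae_eq_Icc]
      exact hIcc y hy q₁ q₂ hq
    haveI := hmμ.1.1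
    haveI := hgoodm.1
    refine ⟨κm, ⟨hgoodm, fun y hy => ?_⟩, hmodm⟩
    exact key_approx (μ y) (hμ.1 y) mμ κm hmμ.1.2
      (fun B C hb hm hcb hcm => tvle_symmdiff (hμ.1 y) (hmμ.2 y hy) hb hm hcb hcm)
      (fun q₁ q₂ hq => hcellm y hy q₁ q₂ hq)
  · -- l-bounds
    intro j hj
    have hj0 : (0:ℝ) < (j:ℝ) := by exact_mod_cast hj
    obtain ⟨mμ, lμ, hmμ, hlμ⟩ := hμ.2 j hj
    obtain ⟨κl, hgoodl, hmodl, hliml⟩ := stieltjes_limit (fun n => lB n j)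
      (fun n t => (hlB n j hj).1.2 t) (hleq j hj) u
    haveI : MeasureTheory.NullSingletonClass κl := ⟨hgoodl.2⟩
    have hcw : Tendsto (ω j) (𝓝[Set.Ici 0] 0) (𝓝 0) := by
      have h := hω.continuousOn j 0 (Set.mem_Ici.2 le_rfl)
      rw [ContinuousWithinAt, hω.map_zero j] at h
      exact h
    have hIccD : ∀ y₁ ∈ D, ∀ y₂ ∈ D, ‖y₁‖ ≤ (j:ℝ) → ‖y₂‖ ≤ (j:ℝ) →
        ∀ q₁ q₂ : ℚ, (q₁:ℝ) < (q₂:ℝ) →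
        |μ y₁ (Set.Icc (q₁:ℝ) (q₂:ℝ)) - μ y₂ (Set.Icc (q₁:ℝ) (q₂:ℝ))| ≤
          ω j ‖y₁ - y₂‖ * (κl (Set.Icc (q₁:ℝ) (q₂:ℝ))).toReal := by
      intro y₁ h1D y₂ h2D h1 h2 q₁ q₂ hq
      have hq' : q₁ < q₂ := by exact_mod_cast hq
      have hT1 := ((hconvU y₁ h1D q₁ q₂ hq').sub (hconvU y₂ h2D q₁ q₂ hq')).abs
      have hT2 : Tendsto (fun n => ω j ‖y₁ - y₂‖ * ((lB n j) (Set.Icc (q₁:ℝ) (q₂:ℝ))).toReal)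
          ↑u (𝓝 (ω j ‖y₁ - y₂‖ * (κl (Set.Icc (q₁:ℝ) (q₂:ℝ))).toReal)) :=
        (hliml (q₁:ℝ) (q₂:ℝ) hq.le).const_mul _
      refine le_of_tendsto_of_tendsto' hT1 hT2 fun n => ?_
      exact diffle_single ((hlB n j hj).2 y₁ y₂ h1 h2) (Metric.isBounded_Icc _ _) measurableSet_Icc
    have hIcc : ∀ y₁ y₂ : EuclideanSpace ℝ (Fin N), ‖y₁‖ ≤ (j:ℝ) → ‖y₂‖ ≤ (j:ℝ) →
        ∀ q₁ q₂ : ℚ, (q₁:ℝ) < (q₂:ℝ) →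
        |μ y₁ (Set.Icc (q₁:ℝ) (q₂:ℝ)) - μ y₂ (Set.Icc (q₁:ℝ) (q₂:ℝ))| ≤
          ω j ‖y₁ - y₂‖ * (κl (Set.Icc (q₁:ℝ) (q₂:ℝ))).toReal := by
      intro y₁ y₂ h1 h2 q₁ q₂ hq
      obtain ⟨z1, hz1, hz1lim⟩ := dense_ball_approx hDd hj0 h1
      obtain ⟨z2, hz2, hz2lim⟩ := dense_ball_approx hDd hj0 h2
      have hc1 := squeeze_param μ lμ (ω j) j hcw (fun a b ha hb => hlμ.2 a b ha hb)
        h1 (fun k => (hz1 k).2) hz1lim (Metric.isBounded_Icc _ _) (measurableSet_Icc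
          (a := (q₁:ℝ)) (b := (q₂:ℝ)))
      have hc2 := squeeze_param μ lμ (ω j) j hcw (fun a b ha hb => hlμ.2 a b ha hb)
        h2 (fun k => (hz2 k).2) hz2lim (Metric.isBounded_Icc _ _) (measurableSet_Icc
          (a := (q₁:ℝ)) (b := (q₂:ℝ)))
      have hT1 := (hc1.sub hc2).abs
      have hnorm : Tendsto (fun k => ‖z1 k - z2 k‖) atTop (𝓝[Set.Ici 0] ‖y₁ - y₂‖) := by
        rw [tendsto_nhdsWithin_iff]
        exact ⟨(hz1lim.sub hz2lim).norm, Filter.Eventually.of_forall fun k => norm_nonneg _⟩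
      have hωT : Tendsto (fun k => ω j ‖z1 k - z2 k‖) atTop (𝓝 (ω j ‖y₁ - y₂‖)) :=
        (hω.continuousOn j ‖y₁ - y₂‖ (Set.mem_Ici.2 (norm_nonneg _))).tendsto.comp hnorm
      have hT2 := hωT.mul_const ((κl (Set.Icc (q₁:ℝ) (q₂:ℝ))).toReal)
      refine le_of_tendsto_of_tendsto' hT1 hT2 fun k => ?_
      exact hIccD (z1 k) (hz1 k).1 (z2 k) (hz2 k).1 (hz1 k).2 (hz2 k).2 q₁ q₂ hq
    haveI := hmμ.1.1
    haveI := hgoodl.1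
    have hfinm : ∀ S : Set ℝ, Bornology.IsBounded S → mμ S ≠ ⊤ := by
      intro S hS
      obtain ⟨R, hR⟩ := hS.subset_closedBall 0
      exact ne_top_of_le_ne_top (isCompact_closedBall 0 R).measure_lt_top.ne (measure_mono hR)
    have hfinκ : ∀ S : Set ℝ, Bornology.IsBounded S → κl S ≠ ⊤ := by
      intro S hS
      obtain ⟨R, hR⟩ := hS.subset_closedBall 0
      exact ne_top_of_le_ne_top (isCompact_closedBall 0 R).measure_lt_top.ne (measure_mono hR)
    refine ⟨κl, ⟨hgoodl, fun y₁ y₂ h1 h2 => ?_⟩, hmodl⟩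
    set cst : ℝ := ω j ‖y₁ - y₂‖ with hcst
    have hcst0 : 0 ≤ cst := hω.nonneg j _ (norm_nonneg _)
    set φ : Set ℝ → ℝ := fun B => μ y₁ B - μ y₂ B with hφdef
    have hφ : IsBMeasure φ := by
      refine ⟨?_, ?_, ?_⟩
      · simp [hφdef, (hμ.1 y₁).empty, (hμ.1 y₂).empty]
      · intro A hm hb hd hub
        exact ((hμ.1 y₁).countably_additive A hm hb hd hub).sub
          ((hμ.1 y₂).countably_additive A hm hb hd hub)
      · intro t
        simp [hφdef, (hμ.1 y₁).singleton, (hμ.1 y₂).singleton]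
    haveI := locfin_add mμ
    haveI := locfin_smul cst κl
    have hρatom : ∀ t : ℝ, (mμ + mμ) {t} = 0 := by
      intro t
      rw [Measure.add_apply, hmμ.1.2 t, add_zero]
    have hΔ : ∀ B C : Set ℝ, Bornology.IsBounded B → MeasurableSet B → Bornology.IsBounded C → MeasurableSet C →
        |φ B - φ C| ≤ ((mμ + mμ) ((B \ C) ∪ (C \ B))).toReal := by
      intro B C hb hm hcb hcm
      have e1 := tvle_symmdiff (hμ.1 y₁) (hmμ.2 y₁ h1) hb hm hcb hcm
      have e2 := tvle_symmdiff (hμ.1 y₂) (hmμ.2 y₂ h2) hb hm hcb hcm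
      have hfinΔ : mμ ((B \ C) ∪ (C \ B)) ≠ ⊤ :=
        hfinm _ (((hb.subset Set.diff_subset).union (hcb.subset Set.diff_subset)))
      rw [Measure.add_apply, ENNReal.toReal_add hfinΔ hfinΔ]
      have habs : |φ B - φ C| ≤ |μ y₁ B - μ y₁ C| + |μ y₂ B - μ y₂ C| := by
        have : φ B - φ C = (μ y₁ B - μ y₁ C) - (μ y₂ B - μ y₂ C) := by
          simp only [hφdef]; ring
        rw [this]
        exact abs_sub _ _
      exact habs.trans (add_le_add e1 e2)
    have hcell : ∀ q₁ q₂ : ℚ, (q₁:ℝ) < (q₂:ℝ) →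
        |φ (Set.Ioo (q₁:ℝ) (q₂:ℝ))| ≤
          ((ENNReal.ofReal cst • κl) (Set.Ioo (q₁:ℝ) (q₂:ℝ))).toReal := by
      intro q₁ q₂ hq
      have key := hIcc y₁ y₂ h1 h2 q₁ q₂ hq
      have e1 : φ (Set.Ioo (q₁:ℝ) (q₂:ℝ)) = φ (Set.Icc (q₁:ℝ) (q₂:ℝ)) := by
        simp only [hφdef]
        rw [bmeas_Ioo_eq_Icc (hμ.1 y₁) hq, bmeas_Ioo_eq_Icc (hμ.1 y₂) hq]
      rw [e1, Measure.smul_apply, smul_eq_mul, measure_congr Ioo_ae_eq_Icc,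
        ENNReal.toReal_mul, ENNReal.toReal_ofReal hcst0]
      exact key
    intro A hAb hAm n P hP
    have key := key_approx φ hφ (mμ + mμ) (ENNReal.ofReal cst • κl) hρatom hΔ hcell
      A hAb hAm n P hP
    rwa [Measure.smul_apply, smul_eq_mul, ENNReal.toReal_mul,
      ENNReal.toReal_ofReal hcst0] at key
end

section
/- Let E be a set of parametric b-measures on ℝ^N with respect to {ω_j}_{j≥1} with bounded l-bounds (for each j there is c_j > 0 and a choice of l-bounds l_j^ν, ν ∈ E, with l_j^ν([t,t+1]) ≤ c_j for all t ∈ ℝ and ν ∈ E), and let Θ = {θ_j^I} be a suitable set of moduli of continuity. Fix an interval I = [q₁,q₂] with rational endpoints and an integer j ≥ 1. Then for every ε > 0 there is δ(ε) > 0 such that for every tagged δ(ε)-partition Δ = {(τ_i,[t_i,t_{i+1}]) : i=1,…,k−1} of I, every y(·) ∈ 𝒦_j^I, and every ν ∈ E: |∫_I dν_{y(s)} − Σ_{i=1}^{k−1} ν_{y(τ_i)}([t_i,t_{i+1}])| < ε. -/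
open MeasureTheory Set Filter Topology

variable {E : Type*} [NormedAddCommGroup E]

-- auxiliary lemmas

lemma bm_union {μ : Set ℝ → ℝ} (h : IsBMeasure μ) {A B : Set ℝ}
    (hA : MeasurableSet A) (hB : MeasurableSet B)
    (hAb : Bornology.IsBounded A) (hBb : Bornology.IsBounded B) (hd : Disjoint A B) :
    μ (A ∪ B) = μ A + μ B := by
  set C : ℕ → Set ℝ := fun n => if n = 0 then A else if n = 1 then B else ∅ with hC
  have hU : (⋃ n, C n) = A ∪ B := by
    ext x; simp only [mem_iUnion, mem_union, hC]
    constructor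
    · rintro ⟨n, hn⟩
      rcases n with _ | _ | n <;> simp_all
    · rintro (hx | hx)
      · exact ⟨0, by simpa⟩
      · exact ⟨1, by simpa⟩
  have hmeas : ∀ n, MeasurableSet (C n) := by
    intro n; rcases n with _ | _ | n <;> simp [hC, hA, hB]
  have hbdd : ∀ n, Bornology.IsBounded (C n) := by
    intro n; rcases n with _ | _ | n <;> simp [hC, hAb, hBb]
  have hC0 : C 0 = A := rfl
  have hC1 : C 1 = B := rfl
  have hC2 : ∀ n, C (n + 2) = ∅ := fun n => rfl
  have hdisj : Pairwise (Function.onFun Disjoint C) := by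
    intro i j hij
    unfold Function.onFun
    rcases i with _ | _ | i <;> rcases j with _ | _ | j <;>
      simp_all [hC0, hC1, hC2, hd, hd.symm, Set.disjoint_empty, Set.empty_disjoint]
  have hs := h.countably_additive C hmeas hbdd hdisj (by rw [hU]; exact hAb.union hBb)
  rw [hU] at hs
  have hs2 : HasSum (fun n => μ (C n)) (∑ n ∈ Finset.range 2, μ (C n)) := by
    apply hasSum_sum_of_ne_finset_zero
    intro n hn
    simp only [Finset.mem_range] at hn
    rcases n with _ | _ | n <;> simp_all [hC0, hC1, hC2, h.empty]
  have := hs.unique hs2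
  rw [this]
  rw [Finset.sum_range_succ, Finset.sum_range_one, hC0, hC1]

lemma bm_Icc_eq_Ioc {μ : Set ℝ → ℝ} (h : IsBMeasure μ) {a b : ℝ} (hab : a ≤ b) :
    μ (Icc a b) = μ (Ioc a b) := by
  have h1 : Icc a b = {a} ∪ Ioc a b := by
    rw [Set.singleton_union, Set.Ioc_insert_left hab]
  rw [h1, bm_union h (measurableSet_singleton a) measurableSet_Ioc
    Bornology.isBounded_singleton (Metric.isBounded_Ioc a b)
    (by simp), h.singleton]
  ring

lemma chain_le {u : ℕ → ℝ} {m : ℕ} (hu : ∀ r < m, u r ≤ u (r + 1)) :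
    ∀ i j, i ≤ j → j ≤ m → u i ≤ u j := by
  intro i j hij hjm
  induction j with
  | zero => simp_all
  | succ j ih =>
    rcases Nat.lt_or_ge i (j+1) with hlt | hge
    · exact le_trans (ih (Nat.lt_succ_iff.mp hlt) (by omega)) (hu j (by omega))
    · have : i = j + 1 := by omega
      simp [this]

lemma bm_telescope {μ : Set ℝ → ℝ} (h : IsBMeasure μ) (u : ℕ → ℝ) (m : ℕ)
    (hu : ∀ r < m, u r ≤ u (r + 1)) :
    μ (Ioc (u 0) (u m)) = ∑ r ∈ Finset.range m, μ (Ioc (u r) (u (r + 1))) := by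
  induction m with
  | zero => simp [h.empty]
  | succ m ih =>
    have hu' : ∀ r < m, u r ≤ u (r + 1) := fun r hr => hu r (by omega)
    have h0m : u 0 ≤ u m := chain_le hu 0 m (by omega) (by omega)
    have hmm : u m ≤ u (m + 1) := hu m (by omega)
    rw [Finset.sum_range_succ, ← ih hu', ← bm_union h measurableSet_Ioc measurableSet_Ioc
      (Metric.isBounded_Ioc _ _) (Metric.isBounded_Ioc _ _) (Set.Ioc_disjoint_Ioc_of_le le_rfl),
      Set.Ioc_union_Ioc_eq_Ioc h0m hmm]

lemma meas_telescope (l : Measure ℝ) (u : ℕ → ℝ) (m : ℕ)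
    (hu : ∀ r < m, u r ≤ u (r + 1)) :
    l (Ioc (u 0) (u m)) = ∑ r ∈ Finset.range m, l (Ioc (u r) (u (r + 1))) := by
  induction m with
  | zero => simp
  | succ m ih =>
    have hu' : ∀ r < m, u r ≤ u (r + 1) := fun r hr => hu r (by omega)
    have h0m : u 0 ≤ u m := chain_le hu 0 m (by omega) (by omega)
    have hmm : u m ≤ u (m + 1) := hu m (by omega)
    rw [Finset.sum_range_succ, ← ih hu',
      ← measure_union (Set.Ioc_disjoint_Ioc_of_le le_rfl) measurableSet_Ioc,
      Set.Ioc_union_Ioc_eq_Ioc h0m hmm]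

lemma sum_grouped (f : ℕ → ℝ) (n k : ℕ) :
    ∑ m ∈ Finset.range (n * k), f m =
      ∑ i ∈ Finset.range k, ∑ r ∈ Finset.range n, f (n * i + r) := by
  induction k with
  | zero => simp
  | succ k ih =>
    rw [Nat.mul_succ, Finset.sum_range_add, ih, Finset.sum_range_succ]


noncomputable def subdiv (t : ℕ → ℝ) (n : ℕ) : ℕ → ℝ :=
  fun m => t (m / n) + ((m % n : ℕ) : ℝ) * (t (m / n + 1) - t (m / n)) / n

lemma subdiv_mul (t : ℕ → ℝ) {n : ℕ} (hn : 0 < n) (i : ℕ) :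
    subdiv t n (n * i) = t i := by
  unfold subdiv
  rw [Nat.mul_div_cancel_left i hn, Nat.mul_mod_right]
  simp

lemma subdiv_succ_sub (t : ℕ → ℝ) {n : ℕ} (hn : 0 < n) (m : ℕ) :
    subdiv t n (m + 1) - subdiv t n m = (t (m / n + 1) - t (m / n)) / n := by
  have hm : n * (m / n) + m % n = m := Nat.div_add_mod m n
  have hr : m % n < n := Nat.mod_lt _ hn
  have hnR : (n : ℝ) ≠ 0 := by exact_mod_cast hn.ne'
  rcases Nat.lt_or_ge (m % n + 1) n with hlt | hge
  · have hdiv : (m + 1) / n = m / n := by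
      conv_lhs => rw [← hm]
      rw [Nat.add_assoc, Nat.mul_add_div hn, Nat.div_eq_of_lt hlt, Nat.add_zero]
    have hmod : (m + 1) % n = m % n + 1 := by
      conv_lhs => rw [← hm]
      rw [Nat.add_assoc, Nat.mul_add_mod, Nat.mod_eq_of_lt hlt]
    unfold subdiv
    rw [hdiv, hmod]
    push_cast
    ring
  · have heq : m % n + 1 = n := by omega
    have hm1 : m + 1 = n * (m / n + 1) := by rw [Nat.mul_add, Nat.mul_one]; omega
    have hdiv : (m + 1) / n = m / n + 1 := by rw [hm1, Nat.mul_div_cancel_left _ hn]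
    have hmod : (m + 1) % n = 0 := by rw [hm1, Nat.mul_mod_right]
    have hcast : ((m % n : ℕ) : ℝ) = (n : ℝ) - 1 := by
      rw [show (m % n : ℕ) = n - 1 by omega]
      push_cast [Nat.cast_sub hn]
      ring
    unfold subdiv
    rw [hdiv, hmod, hcast]
    push_cast
    field_simp
    ring

lemma subdiv_mem (t : ℕ → ℝ) {n : ℕ} (hn : 0 < n) (m : ℕ)
    (hd : t (m / n) ≤ t (m / n + 1)) :
    t (m / n) ≤ subdiv t n m ∧
      subdiv t n m + (t (m / n + 1) - t (m / n)) / n ≤ t (m / n + 1) := by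
  have hr : m % n < n := Nat.mod_lt _ hn
  have hrR : ((m % n : ℕ) : ℝ) + 1 ≤ (n : ℝ) := by exact_mod_cast hr
  have hr0 : (0 : ℝ) ≤ ((m % n : ℕ) : ℝ) := Nat.cast_nonneg _
  have hnpos : (0 : ℝ) < n := by exact_mod_cast hn
  unfold subdiv
  constructor
  · have : 0 ≤ ((m % n : ℕ) : ℝ) * (t (m / n + 1) - t (m / n)) / n := by
      apply div_nonneg (mul_nonneg hr0 (by linarith)) hnpos.le
    linarith
  · have h1 : (((m % n : ℕ) : ℝ) + 1) * (t (m / n + 1) - t (m / n)) ≤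
        (n : ℝ) * (t (m / n + 1) - t (m / n)) :=
      mul_le_mul_of_nonneg_right hrR (by linarith)
    have h2 : ((m % n : ℕ) : ℝ) * (t (m / n + 1) - t (m / n)) / n +
        (t (m / n + 1) - t (m / n)) / n ≤ t (m / n + 1) - t (m / n) := by
      rw [← add_div, div_le_iff₀ hnpos]
      calc ((m % n : ℕ) : ℝ) * (t (m / n + 1) - t (m / n)) + (t (m / n + 1) - t (m / n))
          = (((m % n : ℕ) : ℝ) + 1) * (t (m / n + 1) - t (m / n)) := by ring
        _ ≤ (n : ℝ) * (t (m / n + 1) - t (m / n)) := h1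
        _ = (t (m / n + 1) - t (m / n)) * n := by ring
    linarith


theorem stmt9 {N : ℕ} {ι : Type*} (ω : ℕ → ℝ → ℝ) (hω : IsModulusFamily ω)
    (Θ : ℕ → ℚ → ℚ → ℝ → ℝ) (hΘ : IsSuitableModuli Θ)
    (ν : ι → EuclideanSpace ℝ (Fin N) → Set ℝ → ℝ)
    (hν : ∀ α, IsParamBMeasure ω (ν α))
    (lB : ι → ℕ → Measure ℝ)
    (hlB : ∀ α j, 1 ≤ j → HasLBound (ω j) (ν α) j (lB α j))
    (hlbd : ∀ j, 1 ≤ j → ∃ c > (0 : ℝ), ∀ α, ∀ t : ℝ,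
      lB α j (Set.Icc t (t + 1)) ≤ ENNReal.ofReal c)
    (q₁ q₂ : ℚ) (hq : q₁ < q₂) (j : ℕ) (hj : 1 ≤ j) :
    ∀ ε > 0, ∃ δ > 0, ∀ P : TaggedPartition (q₁ : ℝ) (q₂ : ℝ), P.MeshLT δ →
      ∀ y ∈ KSet (EuclideanSpace ℝ (Fin N)) Θ j q₁ q₂, ∀ α, ∀ L : ℝ,
        IsCurveIntegral (ν α) y (q₁ : ℝ) (q₂ : ℝ) L →
        |L - RiemannSum (ν α) y P| < ε := by
  intro ε hε
  obtain ⟨c, hc, hcb⟩ := hlbd j hj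
  set a : ℝ := (q₁ : ℝ) with ha
  set b : ℝ := (q₂ : ℝ) with hb
  have hab : a < b := by rw [ha, hb]; exact_mod_cast hq
  set M : ℕ := ⌈b - a⌉₊ + 1 with hM
  have hM0 : 0 < M := Nat.succ_pos _
  have hMba : b - a < M := by
    have h1 : b - a ≤ (⌈b - a⌉₊ : ℝ) := Nat.le_ceil _
    have h2 : ((⌈b - a⌉₊ : ℕ) : ℝ) < M := by exact_mod_cast Nat.lt_succ_self _
    linarith
  set C : ℝ := M * c with hCdef
  have hC : 0 < C := mul_pos (by exact_mod_cast hM0) hc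
  have hεC : 0 < ε / (2 * C) := by positivity
  obtain ⟨η, hη, hηω⟩ := Metric.continuousWithinAt_iff.mp
    ((hω.continuousOn j) 0 (mem_Ici.mpr le_rfl)) (ε / (2 * C)) hεC
  obtain ⟨δ', hδ', hδ'Θ⟩ := Metric.continuousWithinAt_iff.mp
    ((hΘ.continuousOn j q₁ q₂ hq) 0 (mem_Ici.mpr le_rfl)) η hη
  set δ := δ' / 2 with hδdef
  have hδpos : 0 < δ := by positivity
  have hΘδ0 : 0 ≤ Θ j q₁ q₂ δ := hΘ.nonneg j q₁ q₂ δ hq hδpos.le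
  have hΘδη : Θ j q₁ q₂ δ < η := by
    have := hδ'Θ (mem_Ici.mpr hδpos.le)
      (by rw [Real.dist_eq, sub_zero, abs_of_pos hδpos]; exact half_lt_self hδ')
    rw [hΘ.map_zero j q₁ q₂ hq, Real.dist_eq, sub_zero] at this
    exact (le_abs_self _).trans_lt this
  have hωΘδ : ω j (Θ j q₁ q₂ δ) < ε / (2 * C) := by
    have := hηω (mem_Ici.mpr hΘδ0)
      (by rw [Real.dist_eq, sub_zero, abs_of_nonneg hΘδ0]; exact hΘδη)
    rw [hω.map_zero j, Real.dist_eq, sub_zero] at this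
    exact (le_abs_self _).trans_lt this
  have hωΘδ0 : 0 ≤ ω j (Θ j q₁ q₂ δ) := hω.nonneg j _ hΘδ0
  refine ⟨δ, hδpos, ?_⟩
  intro P hP y hy α L hL
  obtain ⟨hycont, hybd, hymod⟩ := hy
  obtain ⟨δ₀, hδ₀, hL2⟩ := hL (ε / 2) (by positivity)
  set n : ℕ := ⌈δ / δ₀⌉₊ + 1 with hndef
  have hn0 : 0 < n := Nat.succ_pos _
  have hnR : (0 : ℝ) < n := by exact_mod_cast hn0
  have hδn : δ / n < δ₀ := by
    rw [div_lt_iff₀ hnR]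
    have h1 : δ / δ₀ < (n : ℝ) := by
      have h2 : ((⌈δ / δ₀⌉₊ : ℕ) : ℝ) < n := by exact_mod_cast Nat.lt_succ_self _
      linarith [Nat.le_ceil (δ / δ₀)]
    calc δ = (δ / δ₀) * δ₀ := (div_mul_cancel₀ δ hδ₀.ne').symm
    _ < n * δ₀ := mul_lt_mul_of_pos_right h1 hδ₀
    _ = δ₀ * n := mul_comm _ _
  set T : ℕ → ℝ := subdiv P.t n with hT
  have hbm : ∀ y', IsBMeasure (ν α y') := (hν α).1
  have hTd : ∀ m, T (m + 1) - T m = (P.t (m / n + 1) - P.t (m / n)) / n :=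
    fun m => subdiv_succ_sub P.t hn0 m
  have hTmul : ∀ i, T (n * i) = P.t i := fun i => subdiv_mul P.t hn0 i
  have htmono : ∀ i i', i ≤ i' → i' ≤ P.k → P.t i ≤ P.t i' :=
    fun i i' h1 h2 => chain_le (fun r hr => (P.lt r hr).le) i i' h1 h2
  have hidx : ∀ m < n * P.k, m / n < P.k := by
    intro m hm
    rw [Nat.div_lt_iff_lt_mul hn0, Nat.mul_comm]
    exact hm
  have hdpos : ∀ m < n * P.k, 0 < P.t (m / n + 1) - P.t (m / n) := by
    intro m hm
    have := P.lt (m / n) (hidx m hm)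
    linarith
  have hTinc : ∀ m < n * P.k, T m < T (m + 1) := by
    intro m hm
    have h1 := hTd m
    have h2 := hdpos m hm
    have : 0 < (P.t (m / n + 1) - P.t (m / n)) / n := div_pos h2 hnR
    linarith
  have hTmem : ∀ m < n * P.k, P.t (m / n) ≤ T m ∧
      T m + (P.t (m / n + 1) - P.t (m / n)) / n ≤ P.t (m / n + 1) := by
    intro m hm
    exact subdiv_mem P.t hn0 m (by linarith [hdpos m hm])
  have hTmem' : ∀ m < n * P.k, P.t (m / n) ≤ T m ∧ T m ≤ P.t (m / n + 1) := by
    intro m hm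
    have h1 := hTmem m hm
    have h2 : 0 ≤ (P.t (m / n + 1) - P.t (m / n)) / n :=
      div_nonneg (by linarith [hdpos m hm]) hnR.le
    exact ⟨h1.1, by linarith [h1.2]⟩
  have hptmem : ∀ i ≤ P.k, a ≤ P.t i ∧ P.t i ≤ b := by
    intro i hi
    constructor
    · have := htmono 0 i (Nat.zero_le _) hi; rwa [P.left] at this
    · have := htmono i P.k hi le_rfl; rwa [P.right] at this
  have hTab : ∀ m < n * P.k, a ≤ T m ∧ T (m + 1) ≤ b := by
    intro m hm
    have h1 := hTmem m hm
    have h2 := hptmem (m / n) (hidx m hm).le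
    have h3 := hptmem (m / n + 1) (hidx m hm)
    have h4 := hTd m
    exact ⟨le_trans h2.1 h1.1, by linarith [h1.2, h3.2]⟩
  set R : TaggedPartition a b :=
    { k := n * P.k
      k_pos := Nat.mul_pos hn0 P.k_pos
      t := T
      tag := T
      left := by
        have := hTmul 0
        rwa [Nat.mul_zero, P.left] at this
      right := by
        have := hTmul P.k
        rwa [P.right] at this
      lt := fun m hm => hTinc m hm
      tag_mem := fun m hm => ⟨le_rfl, (hTinc m hm).le⟩ } with hR
  have hmeshR : R.MeshLT δ₀ := by
    intro m hm
    show T (m + 1) - T m < δ₀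
    rw [hTd m]
    have hm' : m < n * P.k := hm
    have h1 : P.t (m / n + 1) - P.t (m / n) < δ := hP (m / n) (hidx m hm')
    calc (P.t (m / n + 1) - P.t (m / n)) / n < δ / n := by gcongr
    _ < δ₀ := hδn
  have hRS : |L - RiemannSum (ν α) y R| < ε / 2 := hL2 R hmeshR
  -- grouping identity
  have hpiece : ∀ i < P.k, ν α (y (P.tag i)) (Icc (P.t i) (P.t (i + 1))) =
      ∑ r ∈ Finset.range n, ν α (y (P.tag i)) (Icc (T (n * i + r)) (T (n * i + r + 1))) := by
    intro i hi
    have hudiv : ∀ r < n, (n * i + r) / n = i := by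
      intro r hr
      rw [Nat.mul_add_div hn0, Nat.div_eq_of_lt hr, Nat.add_zero]
    have huinc : ∀ r < n, T (n * i + r) ≤ T (n * i + (r + 1)) := by
      intro r hr
      have h1 := hTd (n * i + r)
      rw [hudiv r hr] at h1
      have h2 : 0 ≤ (P.t (i + 1) - P.t i) / n := div_nonneg (by linarith [P.lt i hi]) hnR.le
      have : n * i + (r + 1) = (n * i + r) + 1 := by omega
      rw [this]
      linarith
    have h0 : T (n * i + 0) = P.t i := by rw [Nat.add_zero, hTmul]
    have hn' : T (n * i + n) = P.t (i + 1) := by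
      rw [show n * i + n = n * (i + 1) by ring, hTmul]
    have hle : P.t i ≤ P.t (i + 1) := (P.lt i hi).le
    calc ν α (y (P.tag i)) (Icc (P.t i) (P.t (i + 1)))
        = ν α (y (P.tag i)) (Ioc (T (n * i + 0)) (T (n * i + n))) := by
          rw [h0, hn', bm_Icc_eq_Ioc (hbm _) hle]
      _ = ∑ r ∈ Finset.range n, ν α (y (P.tag i)) (Ioc (T (n * i + r)) (T (n * i + (r + 1)))) :=
          bm_telescope (hbm _) (fun r => T (n * i + r)) n huinc
      _ = ∑ r ∈ Finset.range n, ν α (y (P.tag i)) (Icc (T (n * i + r)) (T (n * i + r + 1))) := by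
          apply Finset.sum_congr rfl
          intro r hr
          rw [Finset.mem_range] at hr
          rw [← bm_Icc_eq_Ioc (hbm _) (huinc r hr)]
          norm_num [Nat.add_assoc]
  have hgroup : ∑ m ∈ Finset.range (n * P.k),
      ν α (y (P.tag (m / n))) (Icc (T m) (T (m + 1))) = RiemannSum (ν α) y P := by
    rw [sum_grouped (fun m => ν α (y (P.tag (m / n))) (Icc (T m) (T (m + 1)))) n P.k,
      RiemannSum]
    apply Finset.sum_congr rfl
    intro i hi
    rw [Finset.mem_range] at hi
    rw [hpiece i hi]
    apply Finset.sum_congr rfl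
    intro r hr
    rw [Finset.mem_range] at hr
    have : (n * i + r) / n = i := by
      rw [Nat.mul_add_div hn0, Nat.div_eq_of_lt hr, Nat.add_zero]
    rw [this]
  have hRSR : RiemannSum (ν α) y R = ∑ m ∈ Finset.range (n * P.k),
      ν α (y (T m)) (Icc (T m) (T (m + 1))) := rfl
  -- the l-bound measure
  obtain ⟨⟨hlfin, hlatom⟩, hlDiff⟩ := hlB α j hj
  haveI : IsLocallyFiniteMeasure (lB α j) := hlfin
  haveI : NullSingletonClass (lB α j) := ⟨hlatom⟩
  have hkey : ∀ m < n * P.k,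
      |ν α (y (P.tag (m / n))) (Icc (T m) (T (m + 1))) -
        ν α (y (T m)) (Icc (T m) (T (m + 1)))| ≤
      ω j (Θ j q₁ q₂ δ) * (lB α j (Ioc (T m) (T (m + 1)))).toReal := by
    intro m hm
    have hi := hidx m hm
    have htag := P.tag_mem (m / n) hi
    have hTm := hTmem' m hm
    have hpt0 := hptmem (m / n) hi.le
    have hpt1 := hptmem (m / n + 1) hi
    set p := P.tag (m / n) with hp
    set s := T m with hs
    have hpI : p ∈ Icc a b := ⟨le_trans hpt0.1 htag.1, le_trans htag.2 hpt1.2⟩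
    have hsI : s ∈ Icc a b := ⟨le_trans hpt0.1 hTm.1, le_trans hTm.2 hpt1.2⟩
    have hps : |p - s| ≤ δ := by
      have hmesh := hP (m / n) hi
      rw [abs_le]
      have h1 := htag.1
      have h2 := htag.2
      have h3 := hTm.1
      have h4 := hTm.2
      constructor <;> linarith
    have hnorm : ‖y p - y s‖ ≤ Θ j q₁ q₂ δ := by
      refine le_trans (hymod p hpI s hsI) ?_
      exact hΘ.monotoneOn j q₁ q₂ hq (mem_Ici.mpr (abs_nonneg _))
        (mem_Ici.mpr hδpos.le) hps
    have hωb : ω j ‖y p - y s‖ ≤ ω j (Θ j q₁ q₂ δ) :=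
      hω.monotoneOn j (mem_Ici.mpr (norm_nonneg _)) (mem_Ici.mpr hΘδ0) hnorm
    have hDL := hlDiff (y p) (y s) (hybd p hpI) (hybd s hsI)
    have hpart : IsBorelPartition (Icc (T m) (T (m + 1)))
        (fun _ : Fin 1 => Icc (T m) (T (m + 1))) := by
      refine ⟨fun _ => measurableSet_Icc, ?_, ?_⟩
      · intro i j hij
        exact absurd (Subsingleton.elim i j) hij
      · exact iUnion_const _
    have h1 := hDL (Icc (T m) (T (m + 1))) (Metric.isBounded_Icc _ _) measurableSet_Icc
      1 (fun _ => Icc (T m) (T (m + 1))) hpart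
    rw [Fin.sum_univ_one] at h1
    have h2 : (lB α j (Icc (T m) (T (m + 1)))).toReal =
        (lB α j (Ioc (T m) (T (m + 1)))).toReal := by
      rw [(measure_congr Ioc_ae_eq_Icc).symm]
    rw [h2] at h1
    refine h1.trans ?_
    apply mul_le_mul_of_nonneg_right hωb ENNReal.toReal_nonneg
  have hsubab : ∀ m < n * P.k, Ioc (T m) (T (m + 1)) ⊆ Icc a b := by
    intro m hm
    have h := hTab m hm
    exact (Set.Ioc_subset_Icc_self).trans (Set.Icc_subset_Icc h.1 h.2)
  have hIccfin : lB α j (Icc a b) < ⊤ := isCompact_Icc.measure_lt_top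
  have hfin : ∀ m ∈ Finset.range (n * P.k), lB α j (Ioc (T m) (T (m + 1))) ≠ ⊤ := by
    intro m hm
    rw [Finset.mem_range] at hm
    exact ((measure_mono (hsubab m hm)).trans_lt hIccfin).ne
  have htot : ∑ m ∈ Finset.range (n * P.k), (lB α j (Ioc (T m) (T (m + 1)))).toReal =
      (lB α j (Ioc a b)).toReal := by
    rw [← ENNReal.toReal_sum hfin, ← meas_telescope (lB α j) T (n * P.k)
      (fun m hm => (hTinc m hm).le)]
    have e0 : T 0 = a := by have := hTmul 0; rwa [Nat.mul_zero, P.left] at this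
    have e1 : T (n * P.k) = b := by have := hTmul P.k; rwa [P.right] at this
    rw [e0, e1]
  have hsub : Ioc a b ⊆ ⋃ i ∈ Finset.range M, Icc (a + i) (a + i + 1) := by
    intro x hx
    have h0 : 0 ≤ x - a := by linarith [hx.1]
    set i := ⌊x - a⌋₊ with hi
    have h1 : (i : ℝ) ≤ x - a := Nat.floor_le h0
    have h2 : x - a < i + 1 := Nat.lt_floor_add_one _
    have hiM : i < M := by
      have h3 : (i : ℝ) < M := lt_of_le_of_lt h1 (lt_of_le_of_lt (by linarith [hx.2]) hMba)
      exact_mod_cast h3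
    refine Set.mem_biUnion (Finset.mem_range.mpr hiM) ?_
    exact ⟨by linarith, by linarith⟩
  have hlC : (lB α j (Ioc a b)).toReal ≤ C := by
    apply ENNReal.toReal_le_of_le_ofReal hC.le
    calc lB α j (Ioc a b) ≤ lB α j (⋃ i ∈ Finset.range M, Icc (a + i) (a + i + 1)) :=
          measure_mono hsub
      _ ≤ ∑ i ∈ Finset.range M, lB α j (Icc (a + i) (a + i + 1)) :=
          measure_biUnion_finset_le _ _
      _ ≤ ∑ i ∈ Finset.range M, ENNReal.ofReal c := by
          apply Finset.sum_le_sum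
          intro i _
          exact hcb α (a + i)
      _ = M * ENNReal.ofReal c := by rw [Finset.sum_const, Finset.card_range, nsmul_eq_mul]
      _ = ENNReal.ofReal C := by
          rw [hCdef, ENNReal.ofReal_mul (by positivity), ENNReal.ofReal_natCast]
  have hdiff : |RiemannSum (ν α) y P - RiemannSum (ν α) y R| < ε / 2 := by
    rw [← hgroup, hRSR, ← Finset.sum_sub_distrib]
    calc |∑ m ∈ Finset.range (n * P.k),
          (ν α (y (P.tag (m / n))) (Icc (T m) (T (m + 1))) -
            ν α (y (T m)) (Icc (T m) (T (m + 1))))|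
        ≤ ∑ m ∈ Finset.range (n * P.k),
          |ν α (y (P.tag (m / n))) (Icc (T m) (T (m + 1))) -
            ν α (y (T m)) (Icc (T m) (T (m + 1)))| := Finset.abs_sum_le_sum_abs _ _
      _ ≤ ∑ m ∈ Finset.range (n * P.k),
          ω j (Θ j q₁ q₂ δ) * (lB α j (Ioc (T m) (T (m + 1)))).toReal := by
          apply Finset.sum_le_sum
          intro m hm
          exact hkey m (Finset.mem_range.mp hm)
      _ = ω j (Θ j q₁ q₂ δ) * (lB α j (Ioc a b)).toReal := by
          rw [← Finset.mul_sum, htot]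
      _ ≤ ω j (Θ j q₁ q₂ δ) * C := mul_le_mul_of_nonneg_left hlC hωΘδ0
      _ < (ε / (2 * C)) * C := mul_lt_mul_of_pos_right hωΘδ hC
      _ = ε / 2 := by
          field_simp
  calc |L - RiemannSum (ν α) y P|
      ≤ |L - RiemannSum (ν α) y R| + |RiemannSum (ν α) y R - RiemannSum (ν α) y P| :=
        abs_sub_le _ _ _
    _ = |L - RiemannSum (ν α) y R| + |RiemannSum (ν α) y P - RiemannSum (ν α) y R| := by
        rw [abs_sub_comm (RiemannSum (ν α) y R)]
    _ < ε / 2 + ε / 2 := add_lt_add hRS hdiff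
    _ = ε := by ring
end
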